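/- arXiv:2303.04531 — 4 statements merged into one kernel-verified Lean document; each statement's English description precedes it below -/
import Mathlib

section
/- Let A = {a_1 < a_2 < ...} be a subset of the positive integers satisfying 2a_{s-1} + 4a_{s-2} + 6a_{s-3} + ... + 2(s-1)a_1 < a_s for all s ≥ 2. Then for all positive integers m and n, the number P(m,n,A) of partitions of m into at most n parts, all of which lie in A, is at most the n-th Fibonacci number F(n). -/
open Finset Nat

namespace RPF

variable (a : ℕ → ℕ)

def W (x : ℕ →₀ ℕ) : ℕ := x.sum fun i c => c * a i
def SZ (x : ℕ →₀ ℕ) : ℕ := x.sum fun _ c => c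
def S (j m n : ℕ) : Set (ℕ →₀ ℕ) :=
  {x | W a x = m ∧ SZ x ≤ n ∧ ∀ i ∈ x.support, i < j}
def Sig (j : ℕ) : ℕ := ∑ i ∈ range j, a i
def H (j e : ℕ) : ℕ := ∑ i ∈ range (j+1), (e + 2*(j - i)) * a i

lemma W_add (x y : ℕ→₀ℕ) : W a (x + y) = W a x + W a y :=
  Finsupp.sum_add_index' (fun _ => zero_mul _) (fun i b₁ b₂ => add_mul b₁ b₂ (a i))

lemma SZ_add (x y : ℕ→₀ℕ) : SZ (x + y) = SZ x + SZ y :=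
  Finsupp.sum_add_index' (fun _ => rfl) (fun _ _ _ => rfl)

lemma W_single (j c : ℕ) : W a (Finsupp.single j c) = c * a j :=
  Finsupp.sum_single_index (zero_mul _)

lemma SZ_single (j c : ℕ) : SZ (Finsupp.single j c) = c :=
  Finsupp.sum_single_index rfl

variable {a}

lemma apos (ha : StrictMono a) (hpos : 0 < a 0) (i : ℕ) : 0 < a i :=
  hpos.trans_le (ha.monotone (Nat.zero_le i))

lemma W_eq_zero (ha : StrictMono a) (hpos : 0 < a 0) {x : ℕ→₀ℕ} (h : W a x = 0) : x = 0 := by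
  by_contra hx
  obtain ⟨i, hi⟩ := Finsupp.ne_iff.mp hx
  simp only [Finsupp.coe_zero, Pi.zero_apply] at hi
  have hmem : i ∈ x.support := Finsupp.mem_support_iff.mpr hi
  have h1 : x i * a i ≤ W a x := Finset.single_le_sum (f := fun i => x i * a i)
    (fun _ _ => Nat.zero_le _) hmem
  have h2 : 0 < x i * a i := Nat.mul_pos (Nat.pos_of_ne_zero hi) (apos ha hpos i)
  omega

lemma part_le_W (ha : StrictMono a) (hpos : 0 < a 0) {x : ℕ→₀ℕ} {i : ℕ}
    (hi : i ∈ x.support) : a i ≤ W a x := by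
  have h1 : x i * a i ≤ W a x := Finset.single_le_sum (f := fun i => x i * a i)
    (fun _ _ => Nat.zero_le _) hi
  have h2 : 1 ≤ x i := Nat.one_le_iff_ne_zero.mpr (Finsupp.mem_support_iff.mp hi)
  calc a i = 1 * a i := (one_mul _).symm
  _ ≤ x i * a i := Nat.mul_le_mul_right _ h2
  _ ≤ W a x := h1

lemma mult_le_W (ha : StrictMono a) (hpos : 0 < a 0) (x : ℕ→₀ℕ) (i : ℕ) :
    x i ≤ W a x := by
  by_cases hi : i ∈ x.support
  · have h1 : x i * a i ≤ W a x := Finset.single_le_sum (f := fun i => x i * a i)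
      (fun _ _ => Nat.zero_le _) hi
    calc x i = x i * 1 := (mul_one _).symm
    _ ≤ x i * a i := Nat.mul_le_mul_left _ (apos ha hpos i)
    _ ≤ W a x := h1
  · simp [Finsupp.notMem_support_iff.mp hi]

lemma mult_le_SZ (x : ℕ→₀ℕ) (j : ℕ) : x j ≤ SZ x := by
  by_cases hj : j ∈ x.support
  · have hrfl : SZ x = ∑ i ∈ x.support, x i := rfl
    rw [hrfl]
    exact Finset.single_le_sum (f := fun i => x i) (fun _ _ => Nat.zero_le _) hj
  · simp [Finsupp.notMem_support_iff.mp hj]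

lemma S_finite (ha : StrictMono a) (hpos : 0 < a 0) (j m n : ℕ) : (S a j m n).Finite := by
  set Y : ℕ→₀ℕ := ∑ i ∈ range (m+1), Finsupp.single i m with hY
  have hYapp : ∀ i, i ≤ m → m ≤ Y i := by
    intro i him
    have h0 : Y i = ∑ k ∈ range (m+1), Finsupp.single k m i := by
      rw [hY]; exact Finset.sum_apply' i
    rw [h0]
    have hmem : i ∈ range (m+1) := mem_range.mpr (Nat.lt_succ_of_le him)
    calc m = Finsupp.single i m i := by simp
    _ ≤ ∑ k ∈ range (m+1), Finsupp.single k m i :=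
        Finset.single_le_sum (f := fun k => Finsupp.single k m i) (fun _ _ => Nat.zero_le _) hmem
  apply Set.Finite.subset (Set.finite_Icc 0 Y)
  intro x hx
  obtain ⟨hW, hSZ, hsupp⟩ := hx
  refine ⟨Finsupp.le_def.mpr fun i => Nat.zero_le _, Finsupp.le_def.mpr fun i => ?_⟩
  by_cases hi : i ∈ x.support
  · have hai : a i ≤ m := hW ▸ part_le_W ha hpos hi
    have him : i ≤ m := le_trans ha.le_apply hai
    have hxi : x i ≤ m := hW ▸ mult_le_W ha hpos x i
    exact le_trans hxi (hYapp i him)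
  · simp [Finsupp.notMem_support_iff.mp hi]

/-! ### H identities -/

lemma H_add (j e k : ℕ) : H a j (e + k) = H a j e + k * Sig a (j+1) := by
  unfold H Sig
  rw [Finset.mul_sum, ← Finset.sum_add_distrib]
  exact Finset.sum_congr rfl fun i _ => by ring

lemma H_top (k e : ℕ) : H a (k+1) e = e * a (k+1) + H a k (e+2) := by
  unfold H
  rw [Finset.sum_range_succ]
  have h1 : (e + 2*((k+1) - (k+1))) * a (k+1) = e * a (k+1) := by simp
  rw [h1, add_comm]
  congr 1
  apply Finset.sum_congr rfl
  intro i hi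
  have hik : i ≤ k := Nat.lt_succ_iff.mp (mem_range.mp hi)
  have h2 : (k+1) - i = (k - i) + 1 := by omega
  rw [h2]; ring

lemma e_mul_le_H (j e : ℕ) : e * a j ≤ H a j e := by
  unfold H
  have hmem : j ∈ range (j+1) := self_mem_range_succ j
  calc e * a j = (e + 2*(j-j)) * a j := by simp
  _ ≤ _ := Finset.single_le_sum (f := fun i => (e + 2*(j - i)) * a i)
      (fun _ _ => Nat.zero_le _) hmem

lemma two_Sig_le_H2 (k : ℕ) : 2 * Sig a (k+1) ≤ H a k 2 := by
  unfold H Sig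
  rw [Finset.mul_sum]
  apply Finset.sum_le_sum
  intro i _
  have h : 2 * a i ≤ (2 + 2*(k-i)) * a i := Nat.mul_le_mul_right _ (by omega)
  simpa using h

lemma growthH (hgrow : ∀ s : ℕ, 1 ≤ s → ∑ t ∈ Finset.Icc 1 s, 2 * t * a (s - t) < a s)
    (k : ℕ) : H a k 2 < a (k+1) := by
  have h := hgrow (k+1) (Nat.le_add_left 1 k)
  have heq : ∑ t ∈ Finset.Icc 1 (k+1), 2 * t * a ((k+1) - t)
      = ∑ i ∈ range (k+1), (2 + 2*(k - i)) * a i := by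
    apply Finset.sum_nbij' (fun t => (k+1) - t) (fun i => (k+1) - i)
    · intro t ht
      simp only [Finset.mem_Icc] at ht
      exact mem_range.mpr (by omega)
    · intro i hi
      have := mem_range.mp hi
      simp only [Finset.mem_Icc]
      omega
    · intro t ht
      simp only [Finset.mem_Icc] at ht
      omega
    · intro i hi
      have := mem_range.mp hi
      omega
    · intro t ht
      simp only [Finset.mem_Icc] at ht
      have h2 : 2 + 2 * (k - ((k+1) - t)) = 2 * t := by omega
      rw [h2]
  rw [heq] at h
  exact h

/-! ### Fibonacci lemmas -/

lemma fib_tsub_add (x : ℕ) : fib (x - 1) + fib (x - 2) ≤ fib x := by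
  match x with
  | 0 => simp
  | 1 => simp
  | (y+2) => simp [Nat.fib_add_two]; omega

lemma LB (q : ℕ) : ∀ n : ℕ, ∑ c ∈ range q, fib (n - (2*q - c)) ≤ fib (n - (q-1)) := by
  induction q with
  | zero => intro n; simp
  | succ q IH =>
    intro n
    rw [Finset.sum_range_succ]
    have h1 : ∀ c ∈ range q, fib (n - (2*(q+1) - c)) = fib ((n-2) - (2*q - c)) := by
      intro c hc
      have := mem_range.mp hc
      congr 1
      omega
    rw [Finset.sum_congr rfl h1]
    have h2 : ∑ c ∈ range q, fib ((n-2) - (2*q - c)) ≤ fib ((n-2) - (q-1)) := IH (n-2)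
    have h3 : fib (n - (2*(q+1) - q)) = fib (n - (q+2)) := by congr 1; omega
    rw [h3]
    have h5 : fib ((n-2) - (q-1)) ≤ fib ((n - q) - 1) := fib_mono (by omega)
    have h6 : fib (n - (q+2)) ≤ fib ((n - q) - 2) := fib_mono (by omega)
    calc ∑ c ∈ range q, fib ((n-2) - (2*q - c)) + fib (n - (q+2))
        ≤ fib ((n-q) - 1) + fib ((n-q) - 2) := Nat.add_le_add (le_trans h2 h5) h6
    _ ≤ fib (n - q) := fib_tsub_add _
    _ = fib (n - ((q+1) - 1)) := by simp

lemma LS (e : ℕ) (he : 1 ≤ e) : ∀ n : ℕ,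
    ∑ c ∈ range (e+1), fib (n - (3*e+2 - c)) ≤ fib (n - (e+2)) := by
  induction e with
  | zero => omega
  | succ e IH =>
    intro n
    by_cases he1 : e = 0
    · subst he1
      simp only [Finset.sum_range_succ, Finset.sum_range_one]
      norm_num
      have h1 := fib_tsub_add (n - 3)
      have e1 : n - 3 - 1 = n - 4 := by omega
      have e2 : n - 3 - 2 = n - 5 := by omega
      rw [e1, e2] at h1
      omega
    · have he' : 1 ≤ e := Nat.one_le_iff_ne_zero.mpr he1
      rw [Finset.sum_range_succ]
      have h1 : ∀ c ∈ range (e+1), fib (n - (3*(e+1)+2 - c)) = fib ((n-3) - (3*e+2 - c)) := by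
        intro c hc
        have := mem_range.mp hc
        congr 1
        omega
      rw [Finset.sum_congr rfl h1]
      have h2 := IH he' (n-3)
      have h3 : fib (n - (3*(e+1)+2 - (e+1))) ≤ fib ((n - (e+3)) - 1) := fib_mono (by omega)
      have h7 : fib ((n-3) - (e+2)) ≤ fib ((n - (e+3)) - 2) := fib_mono (by omega)
      calc ∑ c ∈ range (e+1), fib ((n-3) - (3*e+2 - c)) + fib (n - (3*(e+1)+2 - (e+1)))
          ≤ fib ((n-(e+3)) - 2) + fib ((n-(e+3)) - 1) :=
            Nat.add_le_add (le_trans h2 h7) h3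
      _ ≤ fib (n - (e+3)) := by rw [Nat.add_comm]; exact fib_tsub_add _
      _ = fib (n - ((e+1)+2)) := by
            have h9 : (e:ℕ) + 1 + 2 = e+3 := by omega
            rw [h9]

/-! ### counting helpers -/

lemma ncard_biUnion_le (q : ℕ) (f : ℕ → Set (ℕ→₀ℕ)) :
    (⋃ c ∈ range q, f c).ncard ≤ ∑ c ∈ range q, (f c).ncard := by
  induction q with
  | zero => simp
  | succ q IH =>
    rw [Finset.sum_range_succ]
    have h : (⋃ c ∈ range (q+1), f c) = (⋃ c ∈ range q, f c) ∪ f q := by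
      rw [Finset.range_add_one]
      simp [Set.biUnion_insert, Set.union_comm]
    rw [h]
    exact le_trans (Set.ncard_union_le _ _) (Nat.add_le_add IH le_rfl)

lemma single_le_of_apply {j c : ℕ} {x : ℕ→₀ℕ} (h : c ≤ x j) : Finsupp.single j c ≤ x := by
  rw [Finsupp.le_def]
  intro i
  by_cases hij : j = i
  · subst hij; simpa using h
  · have h0 : Finsupp.single j c i = 0 := Finsupp.single_eq_of_ne' hij
    rw [h0]; exact Nat.zero_le _

lemma class_bound (ha : StrictMono a) (hpos : 0 < a 0) (j m n c : ℕ) :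
    ({x ∈ S a (j+1) m n | x j = c}).ncard ≤ (S a j (m - c * a j) (n - c)).ncard := by
  have hmaps : ∀ x ∈ {x ∈ S a (j+1) m n | x j = c},
      x.erase j ∈ S a j (m - c * a j) (n - c) := by
    rintro x ⟨⟨hW, hSZ, hsupp⟩, hxj⟩
    have hdec : Finsupp.single j c + x.erase j = x := by
      rw [← hxj]; exact Finsupp.single_add_erase j x
    have h0 := congrArg (W a) hdec
    rw [W_add, W_single] at h0
    have h1 := congrArg SZ hdec
    rw [SZ_add, SZ_single] at h1
    refine ⟨by omega, by omega, ?_⟩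
    intro i hi
    rw [Finsupp.support_erase, Finset.mem_erase] at hi
    have := hsupp i hi.2
    omega
  have hinj : Set.InjOn (fun x => Finsupp.erase j x) {x ∈ S a (j+1) m n | x j = c} := by
    rintro x ⟨_, hxj⟩ y ⟨_, hyj⟩ hxy
    have hx : Finsupp.single j c + x.erase j = x := by
      rw [← hxj]; exact Finsupp.single_add_erase j x
    have hy : Finsupp.single j c + y.erase j = y := by
      rw [← hyj]; exact Finsupp.single_add_erase j y
    simp only at hxy
    rw [← hx, ← hy, hxy]
  exact Set.ncard_le_ncard_of_injOn (fun x => Finsupp.erase j x) hmaps hinj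
    (S_finite ha hpos _ _ _)

lemma removal_bound (ha : StrictMono a) (hpos : 0 < a 0) (j m n : ℕ) :
    ({x ∈ S a (j+1) m n | 1 ≤ x j}).ncard ≤ (S a (j+1) (m - a j) (n - 1)).ncard := by
  have hmaps : ∀ x ∈ {x ∈ S a (j+1) m n | 1 ≤ x j},
      x - Finsupp.single j 1 ∈ S a (j+1) (m - a j) (n - 1) := by
    rintro x ⟨⟨hW, hSZ, hsupp⟩, hxj⟩
    have hle : Finsupp.single j 1 ≤ x := single_le_of_apply hxj
    have hdec : (x - Finsupp.single j 1) + Finsupp.single j 1 = x :=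
      tsub_add_cancel_of_le hle
    have h0 := congrArg (W a) hdec
    rw [W_add, W_single, one_mul] at h0
    have h1 := congrArg SZ hdec
    rw [SZ_add, SZ_single] at h1
    refine ⟨by omega, by omega, ?_⟩
    intro i hi
    have h2 := Finsupp.mem_support_iff.mp hi
    have h3 : ((x - Finsupp.single j 1 : ℕ→₀ℕ)) i = x i - (Finsupp.single j 1 : ℕ→₀ℕ) i :=
      Finsupp.tsub_apply x (Finsupp.single j 1) i
    rw [h3] at h2
    have hxi' : x i ≠ 0 := by omega
    exact hsupp i (Finsupp.mem_support_iff.mpr hxi')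
  have hinj : Set.InjOn (fun x => x - Finsupp.single j 1) {x ∈ S a (j+1) m n | 1 ≤ x j} := by
    rintro x ⟨_, hxj⟩ y ⟨_, hyj⟩ hxy
    have hx := tsub_add_cancel_of_le (single_le_of_apply hxj)
    have hy := tsub_add_cancel_of_le (single_le_of_apply hyj)
    simp only at hxy
    rw [← hx, ← hy, hxy]
  exact Set.ncard_le_ncard_of_injOn (fun x => x - Finsupp.single j 1) hmaps hinj
    (S_finite ha hpos _ _ _)

lemma W_le_SZ_mul (ha : StrictMono a) {j : ℕ} {x : ℕ→₀ℕ}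
    (hsupp : ∀ i ∈ x.support, i < j + 1) : W a x ≤ SZ x * a j := by
  have h1 : W a x = ∑ i ∈ x.support, x i * a i := rfl
  have h2 : SZ x = ∑ i ∈ x.support, x i := rfl
  rw [h1, h2, Finset.sum_mul]
  apply Finset.sum_le_sum
  intro i hi
  exact Nat.mul_le_mul_left _ (ha.monotone (Nat.lt_succ_iff.mp (hsupp i hi)))

lemma forced_pure (ha : StrictMono a) (hpos : 0 < a 0) {j q : ℕ} {x : ℕ→₀ℕ}
    (hW : W a x = q * a j) (hSZ : SZ x ≤ q) (hsupp : ∀ i ∈ x.support, i < j + 1) :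
    x = Finsupp.single j q := by
  have hsub : x.support ⊆ {j} := by
    intro i hi
    rw [Finset.mem_singleton]
    by_contra hij
    have hilt : i < j := lt_of_le_of_ne (Nat.lt_succ_iff.mp (hsupp i hi)) hij
    have h2 : 0 < x i := Nat.pos_of_ne_zero (Finsupp.mem_support_iff.mp hi)
    have hstrict : x i * a i < x i * a j := mul_lt_mul_of_pos_left (ha hilt) h2
    have hlt : W a x < SZ x * a j := by
      have e1 : W a x = ∑ k ∈ x.support, x k * a k := rfl
      have e2 : SZ x = ∑ k ∈ x.support, x k := rfl
      rw [e1, e2, Finset.sum_mul]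
      apply Finset.sum_lt_sum
      · intro k hk
        exact Nat.mul_le_mul_left _ (ha.monotone (Nat.lt_succ_iff.mp (hsupp k hk)))
      · exact ⟨i, hi, hstrict⟩
    have h3 : SZ x * a j ≤ q * a j := Nat.mul_le_mul_right _ hSZ
    omega
  have hx : x = Finsupp.single j (x j) := by
    ext i
    by_cases hij : i = j
    · subst hij; simp
    · rw [Finsupp.single_apply, if_neg (Ne.symm hij)]
      by_contra hxi
      have hm : i ∈ x.support := Finsupp.mem_support_iff.mpr hxi
      have := hsub hm
      rw [Finset.mem_singleton] at this
      exact hij this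
  have hq : x j = q := by
    have h4 : W a x = x j * a j := by
      conv_lhs => rw [hx]
      rw [W_single]
    rw [hW] at h4
    exact Nat.eq_of_mul_eq_mul_right (apos ha hpos j) h4.symm
  rw [hx, hq]



namespace Key

variable {a : ℕ → ℕ}

lemma SZ_eq_zero {x : ℕ→₀ℕ} (h : SZ x = 0) : x = 0 := by
  ext i
  simp only [Finsupp.coe_zero, Pi.zero_apply]
  have := mult_le_SZ x i
  omega

lemma S_budget0 {j m : ℕ} (hm : 1 ≤ m) : S a j m 0 = ∅ := by
  ext x
  simp only [Set.mem_empty_iff_false, iff_false]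
  rintro ⟨hW, hSZ, _⟩
  have hx : x = 0 := SZ_eq_zero (Nat.le_zero.mp hSZ)
  rw [hx] at hW
  have : W a (0 : ℕ→₀ℕ) = 0 := Finsupp.sum_zero_index
  omega

lemma S_cap0 {m n : ℕ} (hm : 1 ≤ m) : S a 0 m n = ∅ := by
  ext x
  simp only [Set.mem_empty_iff_false, iff_false]
  rintro ⟨hW, _, hsupp⟩
  have hx : x = 0 := by
    ext i
    by_contra hxi
    exact Nat.not_lt_zero i (hsupp i (Finsupp.mem_support_iff.mpr fun h => hxi (by simp [h])))
  rw [hx] at hW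
  have : W a (0 : ℕ→₀ℕ) = 0 := Finsupp.sum_zero_index
  omega

lemma S_sum_zero (ha : StrictMono a) (hpos : 0 < a 0) (j n : ℕ) :
    S a j 0 n ⊆ {0} := by
  rintro x ⟨hW, _, _⟩
  exact W_eq_zero ha hpos hW

lemma mul_part_le_W (x : ℕ→₀ℕ) (i : ℕ) : x i * a i ≤ W a x := by
  by_cases hi : i ∈ x.support
  · exact Finset.single_le_sum (f := fun i => x i * a i) (fun _ _ => Nat.zero_le _) hi
  · simp [Finsupp.notMem_support_iff.mp hi]

theorem key (ha : StrictMono a) (hpos : 0 < a 0)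
    (hgrow : ∀ s : ℕ, 1 ≤ s → ∑ t ∈ Finset.Icc 1 s, 2 * t * a (s - t) < a s) :
    ∀ n : ℕ,
      (∀ j e m, 1 ≤ e → H a j e < m → (S a (j+1) m n).ncard ≤ fib (n - e)) ∧
      (∀ j m, 1 ≤ m → (S a j m n).ncard ≤ fib n) := by
  intro n
  induction n using Nat.strong_induction_on with
  | _ n IH =>
  have Apart : ∀ j e m, 1 ≤ e → H a j e < m → (S a (j+1) m n).ncard ≤ fib (n - e) := by
    intro j
    induction j with
    | zero =>
      intro e m he hm
      have hH0 : H a 0 e = e * a 0 := by unfold H; simp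
      rw [hH0] at hm
      rcases Set.eq_empty_or_nonempty (S a 1 m n) with hS | ⟨w, hw⟩
      · rw [hS, Set.ncard_empty]; exact Nat.zero_le _
      · have hsing : ∀ x ∈ S a 1 m n, x = Finsupp.single 0 (x 0) := by
          rintro x ⟨hW, hSZ, hsupp⟩
          ext i
          by_cases hi0 : i = 0
          · subst hi0; simp
          · rw [Finsupp.single_apply, if_neg (Ne.symm hi0)]
            by_contra hxi
            have := hsupp i (Finsupp.mem_support_iff.mpr hxi)
            omega
        obtain ⟨hWw, hSZw, hsuppw⟩ := hw
        have hw' := hsing w ⟨hWw, hSZw, hsuppw⟩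
        have hwW : w 0 * a 0 = m := by
          conv_lhs => rw [← W_single a 0 (w 0)]
          rw [← hw']; exact hWw
        have hsub : S a 1 m n ⊆ {w} := by
          intro x hx
          have hWx := hx.1
          have hx' := hsing x hx
          have hxW : x 0 * a 0 = m := by
            conv_lhs => rw [← W_single a 0 (x 0)]
            rw [← hx']; exact hWx
          have : x 0 = w 0 := by
            apply Nat.eq_of_mul_eq_mul_right hpos
            rw [hxW, hwW]
          rw [Set.mem_singleton_iff, hx', this, ← hw']
        have hcard : (S a 1 m n).ncard ≤ 1 := by
          simpa using Set.ncard_le_ncard hsub (Set.finite_singleton w)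
        have hw0 : e + 1 ≤ w 0 := by
          have h2 : e * a 0 < w 0 * a 0 := by omega
          by_contra hc
          push_neg at hc
          have : w 0 * a 0 ≤ e * a 0 := Nat.mul_le_mul_right _ (by omega)
          omega
        have hn' : e + 1 ≤ n := le_trans hw0 (le_trans (mult_le_SZ w 0) hSZw)
        have h9 : 1 ≤ fib (n - e) := Nat.fib_pos.mpr (by omega)
        show (S a 1 m n).ncard ≤ fib (n - e)
        omega
    | succ k IHj =>
      intro e m he hm
      by_cases hn0 : n = 0
      · subst hn0
        rw [S_budget0 (show 1 ≤ m by
          have h1 : 1 * a 0 ≤ e * a 0 := Nat.mul_le_mul_right _ he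
          have h2 := e_mul_le_H (a := a) (k+1) e
          have h3 : a 0 ≤ a (k+1) := ha.monotone (Nat.zero_le _)
          have h4 : e * a 0 ≤ e * a (k+1) := Nat.mul_le_mul_left _ h3
          omega)]
        simp
      set B := a (k+1) with hBdef
      have hBpos : 0 < B := apos ha hpos _
      have hgw : H a k 2 < B := growthH hgrow k
      have hSg : 2 * Sig a (k+1) ≤ H a k 2 := two_Sig_le_H2 k
      have htop : H a (k+1) e = e * B + H a k (e+2) := H_top k e
      set q := m / B with hqdef
      have hqm : q * B ≤ m := Nat.div_mul_le_self m B
      have hmod : m % B < B := Nat.mod_lt _ hBpos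
      have hdm : B * q + m % B = m := Nat.div_add_mod m B
      have hqm2 : m < q * B + B := by
        have : B * q = q * B := Nat.mul_comm _ _
        omega
      have heB : e * B < m := lt_of_le_of_lt (by omega) hm
      have heq : e ≤ q := by
        by_contra hc
        push_neg at hc
        have h1 : q + 1 ≤ e := hc
        have h2 : (q+1) * B ≤ e * B := Nat.mul_le_mul_right _ h1
        have h3 : (q+1) * B = q * B + B := by ring
        omega
      -- the classes
      set Sc : ℕ → Set (ℕ→₀ℕ) := fun c => {x ∈ S a (k+2) m n | x (k+1) = c} with hScdef
      have hcover : S a (k+2) m n ⊆ ⋃ c ∈ range (q+1), Sc c := by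
        intro x hx
        have hc : x (k+1) ≤ q := by
          have h1 : x (k+1) * B ≤ W a x := mul_part_le_W x (k+1)
          have h2 : W a x = m := hx.1
          rw [hqdef]
          apply (Nat.le_div_iff_mul_le hBpos).mpr
          omega
        exact Set.mem_biUnion (mem_range.mpr (by omega)) ⟨hx, rfl⟩
      have hsumN : (S a (k+2) m n).ncard ≤ ∑ c ∈ range (q+1), (Sc c).ncard := by
        refine le_trans (Set.ncard_le_ncard hcover ?_) (ncard_biUnion_le _ _)
        apply Set.Finite.biUnion (Finset.finite_toSet _)
        intro c _
        exact (S_finite ha hpos (k+2) m n).subset (fun x hx => hx.1)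
      have hclass : ∀ c, (Sc c).ncard ≤ (S a (k+1) (m - c * B) (n - c)).ncard := by
        intro c
        exact class_bound ha hpos (k+1) m n c
      -- bound for classes c ≤ e  (small-multiplicity classes)
      have hsmall : ∀ c, c ≤ e → (Sc c).ncard ≤ fib (n - (3*e+2 - c)) := by
        intro c hce
        have hhyp : H a k (e+2+2*(e-c)) < m - c * B := by
          have h1 : e * B + H a k (e+2) < m := by rw [← htop]; exact hm
          have h2 : (e - c) * B + c * B = e * B := by
            rw [← Nat.add_mul, Nat.sub_add_cancel hce]
          have h3 : 2 * Sig a (k+1) ≤ B := by omega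
          have h4 : 2*(e-c) * Sig a (k+1) ≤ (e-c) * B := by
            have : 2*(e-c) * Sig a (k+1) = (e-c) * (2 * Sig a (k+1)) := by ring
            rw [this]
            exact Nat.mul_le_mul_left _ h3
          have h5 : H a k (e+2+2*(e-c)) = H a k (e+2) + 2*(e-c) * Sig a (k+1) :=
            H_add k (e+2) (2*(e-c))
          omega
        have hA : (S a (k+1) (m - c*B) (n - c)).ncard ≤ fib ((n - c) - (e+2+2*(e-c))) := by
          rcases Nat.eq_zero_or_pos c with hc0 | hc1
          · subst hc0
            simpa using IHj (e+2+2*(e-0)) (m - 0 * B) (by omega) (by simpa using hhyp)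
          · exact ((IH (n - c) (by omega)).1 k (e+2+2*(e-c)) (m - c*B) (by omega) hhyp)
        calc (Sc c).ncard ≤ _ := hclass c
        _ ≤ fib ((n - c) - (e+2+2*(e-c))) := hA
        _ = fib (n - (3*e+2 - c)) := by congr 1; omega
      -- bound for the all-top class (c = q), assuming not the degenerate pure case
      have hlast : ¬ (m = q * B ∧ n ≤ q) → (Sc q).ncard ≤ fib (n - q) := by
        intro hdeg
        rcases Nat.eq_zero_or_pos (m - q * B) with hu0 | hu1
        · -- u = 0, so n > q
          have hmq : m = q * B := by omega
          have hnq : q < n := by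
            rcases Nat.lt_or_ge q n with h | h
            · exact h
            · exact absurd ⟨hmq, h⟩ hdeg
          have h1 : (Sc q).ncard ≤ (S a (k+1) (m - q*B) (n - q)).ncard := hclass q
          have h2 : S a (k+1) (m - q*B) (n - q) ⊆ {0} := by
            rw [show m - q * B = 0 by omega]
            exact S_sum_zero ha hpos _ _
          have h3 : (S a (k+1) (m - q*B) (n - q)).ncard ≤ 1 := by
            simpa using Set.ncard_le_ncard h2 (Set.finite_singleton 0)
          have h4 : 1 ≤ fib (n - q) := Nat.fib_pos.mpr (by omega)
          omega
        · -- u ≥ 1 : use the main statement at budget n - q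
          have hq1 : 1 ≤ q := le_trans he heq
          have h1 := (IH (n - q) (by omega)).2 (k+1) (m - q * B) hu1
          exact le_trans (hclass q) h1
      -- the degenerate pure case handled globally
      by_cases hdeg : m = q * B ∧ n ≤ q
      · obtain ⟨hmq, hnq⟩ := hdeg
        have hsub : S a (k+2) m n ⊆ {Finsupp.single (k+1) q} := by
          rintro x hx
          obtain ⟨hW, hSZ, hsupp⟩ := hx
          have := forced_pure ha hpos (j := k+1) (q := q)
            (by rw [hW, hmq]) (by omega) hsupp
          exact this
        have hcard : (S a (k+2) m n).ncard ≤ 1 := by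
          simpa using Set.ncard_le_ncard hsub (Set.finite_singleton _)
        rcases Set.eq_empty_or_nonempty (S a (k+2) m n) with hS | ⟨w, hwS⟩
        · rw [hS, Set.ncard_empty]; exact Nat.zero_le _
        · have hw' : w = Finsupp.single (k+1) q := hsub hwS
          have hSZw : SZ w = q := by rw [hw']; exact SZ_single (k+1) q
          have hqn : q ≤ n := by
            have := hwS.2.1
            omega
          have hqe : e + 1 ≤ q := by
            by_contra hc
            push_neg at hc
            have hqe' : q ≤ e := by omega
            have : q * B ≤ e * B := Nat.mul_le_mul_right _ hqe'
            omega
          have h1 : 1 ≤ fib (n - e) := Nat.fib_pos.mpr (by omega)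
          show (S a (k+2) m n).ncard ≤ fib (n - e)
          omega
      · -- non-degenerate: sum the class bounds
        rcases Nat.lt_or_ge q (e + 2) with hcase | hcase
        · -- small case : q = e or q = e+1
          rcases Nat.eq_or_lt_of_le heq with hqe | hqe'
          · -- q = e
            have htot : ∑ c ∈ range (q+1), (Sc c).ncard
                ≤ ∑ c ∈ range (e+1), fib (n - (3*e+2 - c)) := by
              rw [← hqe]
              apply Finset.sum_le_sum
              intro c hc
              have : c ≤ e := by
                have := mem_range.mp hc
                omega
              exact hsmall c this
            calc (S a (k+2) m n).ncard ≤ _ := hsumN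
            _ ≤ ∑ c ∈ range (e+1), fib (n - (3*e+2 - c)) := htot
            _ ≤ fib (n - (e+2)) := LS e he n
            _ ≤ fib (n - e) := fib_mono (by omega)
          · -- q = e+1
            have hqe1 : q = e + 1 := by omega
            have htot : ∑ c ∈ range (q+1), (Sc c).ncard
                ≤ ∑ c ∈ range (e+1), fib (n - (3*e+2 - c)) + fib (n - q) := by
              rw [hqe1, Finset.sum_range_succ]
              apply Nat.add_le_add
              · apply Finset.sum_le_sum
                intro c hc
                exact hsmall c (by have := mem_range.mp hc; omega)
              · rw [← hqe1]
                exact hlast hdeg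
            calc (S a (k+2) m n).ncard ≤ _ := hsumN
            _ ≤ ∑ c ∈ range (e+1), fib (n - (3*e+2 - c)) + fib (n - q) := htot
            _ ≤ fib (n - (e+2)) + fib (n - (e+1)) := by
                have h1 := LS e he n
                have h2 : fib (n - q) ≤ fib (n - (e+1)) := fib_mono (by omega)
                omega
            _ ≤ fib (n - e) := by
                have := fib_tsub_add (n - e)
                have e1 : n - e - 1 = n - (e+1) := by omega
                have e2 : n - e - 2 = n - (e+2) := by omega
                rw [e1, e2] at this
                omega
        · -- big case : q ≥ e+2
          have hbig : ∀ c, c < q → (Sc c).ncard ≤ fib (n - (2*q - c)) := by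
            intro c hcq
            have hhyp : H a k (2*(q - c)) < m - c * B := by
              have h1 : c * B + (q-c) * B = q * B := by
                rw [← Nat.add_mul]; congr 1; omega
              have h2 : (q-c) * B = B + (q-c-1) * B := by
                have hd : q-c = 1 + (q-c-1) := by omega
                calc (q-c) * B = (1 + (q-c-1)) * B := by rw [← hd]
                _ = B + (q-c-1) * B := by ring
              have h3 : 2 * Sig a (k+1) ≤ B := by omega
              have h4 : 2*(q-c-1) * Sig a (k+1) ≤ (q-c-1) * B := by
                have hh : 2*(q-c-1) * Sig a (k+1) = (q-c-1) * (2 * Sig a (k+1)) := by ring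
                rw [hh]; exact Nat.mul_le_mul_left _ h3
              have h5 : H a k (2*(q-c)) = H a k 2 + 2*(q-c-1) * Sig a (k+1) := by
                have hh := H_add (a := a) k 2 (2*(q-c-1))
                have he2 : 2 + 2*(q-c-1) = 2*(q-c) := by omega
                rw [he2] at hh
                exact hh
              omega
            have hA : (S a (k+1) (m - c*B) (n - c)).ncard ≤ fib ((n - c) - 2*(q-c)) := by
              rcases Nat.eq_zero_or_pos c with hc0 | hc1
              · subst hc0
                simpa using IHj (2*(q-0)) (m - 0 * B) (by omega) (by simpa using hhyp)
              · exact ((IH (n - c) (by omega)).1 k (2*(q-c)) (m - c*B) (by omega) hhyp)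
            calc (Sc c).ncard ≤ _ := hclass c
            _ ≤ fib ((n - c) - 2*(q-c)) := hA
            _ = fib (n - (2*q - c)) := by congr 1; omega
          have htot : ∑ c ∈ range (q+1), (Sc c).ncard
              ≤ ∑ c ∈ range q, fib (n - (2*q - c)) + fib (n - q) := by
            rw [Finset.sum_range_succ]
            apply Nat.add_le_add
            · apply Finset.sum_le_sum
              intro c hc
              exact hbig c (mem_range.mp hc)
            · exact hlast hdeg
          calc (S a (k+2) m n).ncard ≤ _ := hsumN
          _ ≤ ∑ c ∈ range q, fib (n - (2*q - c)) + fib (n - q) := htot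
          _ ≤ fib (n - (q-1)) + fib (n - q) := by
              have := LB q n
              omega
          _ ≤ fib (n - (q-2)) := by
              have := fib_tsub_add (n - (q-2))
              have e1 : n - (q-2) - 1 = n - (q-1) := by omega
              have e2 : n - (q-2) - 2 = n - q := by omega
              rw [e1, e2] at this
              omega
          _ ≤ fib (n - e) := fib_mono (by omega)
  -- the P part
  have Ppart : ∀ j m, 1 ≤ m → (S a j m n).ncard ≤ fib n := by
    intro j
    induction j with
    | zero =>
      intro m hm
      rw [S_cap0 hm, Set.ncard_empty]
      exact Nat.zero_le _
    | succ k IHj =>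
      intro m hm
      by_cases hn0 : n = 0
      · subst hn0
        rw [S_budget0 hm]
        simp
      by_cases hk : a k ≤ m
      · -- split on whether a k is used
        have hsplit : S a (k+1) m n ⊆
            {x ∈ S a (k+1) m n | x k = 0} ∪ {x ∈ S a (k+1) m n | 1 ≤ x k} := by
          intro x hx
          by_cases h : x k = 0
          · exact Set.mem_union_left _ ⟨hx, h⟩
          · exact Set.mem_union_right _ ⟨hx, by omega⟩
        have hN : (S a (k+1) m n).ncard ≤
            ({x ∈ S a (k+1) m n | x k = 0}).ncard + ({x ∈ S a (k+1) m n | 1 ≤ x k}).ncard := by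
          refine le_trans (Set.ncard_le_ncard hsplit ?_) (Set.ncard_union_le _ _)
          apply Set.Finite.union
          · exact (S_finite ha hpos (k+1) m n).subset (fun x hx => hx.1)
          · exact (S_finite ha hpos (k+1) m n).subset (fun x hx => hx.1)
        -- skip class
        have hskipsub : {x ∈ S a (k+1) m n | x k = 0} ⊆ S a k m n := by
          rintro x ⟨⟨hW, hSZ, hsupp⟩, hxk⟩
          refine ⟨hW, hSZ, ?_⟩
          intro i hi
          have h1 := hsupp i hi
          have h2 : i ≠ k := by
            intro hik
            subst hik
            exact (Finsupp.mem_support_iff.mp hi) hxk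
          omega
        have hskip : ({x ∈ S a (k+1) m n | x k = 0}).ncard ≤ fib (n - 2) := by
          match k with
          | 0 =>
            have h0 : {x ∈ S a (0+1) m n | x 0 = 0} ⊆ (∅ : Set (ℕ→₀ℕ)) := by
              intro x hx
              have h1 := hskipsub hx
              rw [S_cap0 hm] at h1
              exact h1
            have h2 := Set.subset_empty_iff.mp h0
            rw [h2, Set.ncard_empty]
            exact Nat.zero_le _
          | (k'+1) =>
            have hgw : H a k' 2 < a (k'+1) := growthH hgrow k'
            have hm2 : H a k' 2 < m := lt_of_lt_of_le hgw hk
            have := Apart k' 2 m (by omega) hm2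
            exact le_trans (Set.ncard_le_ncard hskipsub (S_finite ha hpos _ _ _)) this
        -- removal class
        have hrem := removal_bound ha hpos k m n
        rcases Nat.eq_or_lt_of_le hk with hmk | hmk'
        · -- m = a k : removal class has at most one element
          have hz : S a (k+1) (m - a k) (n-1) ⊆ {0} := by
            rw [show m - a k = 0 by omega]
            exact S_sum_zero ha hpos _ _
          have h1 : (S a (k+1) (m - a k) (n-1)).ncard ≤ 1 := by
            simpa using Set.ncard_le_ncard hz (Set.finite_singleton 0)
          have hfib1 : 1 + fib (n - 2) ≤ fib n := by
            match n with
            | 1 => simp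
            | (n'+2) =>
              have h2 : 1 ≤ fib (n'+1) := Nat.fib_pos.mpr (by omega)
              have h3 : fib (n'+2) = fib (n'+1) + fib n' := by
                rw [Nat.fib_add_two]; omega
              simp only [Nat.add_sub_cancel]
              omega
          omega
        · -- m > a k : use the main bound at budget n-1
          have h1 := (IH (n-1) (by omega)).2 (k+1) (m - a k) (by omega)
          have hfib2 : fib (n-1) + fib (n - 2) ≤ fib n := by
            have := fib_tsub_add n
            omega
          omega
      · -- a k > m : the top index cannot be used
        push_neg at hk
        have hsub : S a (k+1) m n ⊆ S a k m n := by
          rintro x ⟨hW, hSZ, hsupp⟩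
          refine ⟨hW, hSZ, ?_⟩
          intro i hi
          have h1 := hsupp i hi
          have h2 : i ≠ k := by
            intro hik
            subst hik
            have := part_le_W ha hpos hi
            omega
          omega
        exact le_trans (Set.ncard_le_ncard hsub (S_finite ha hpos _ _ _)) (IHj m hm)
  exact ⟨Apart, Ppart⟩

end Key

end RPF

/-- `a 0 < a 1 < ⋯` enumerates the set `A`; `a s` is the element `a_{s+1}` of the paper.
The growth condition reads: for every `s ≥ 1`,
`2·a_{s-1} + 4·a_{s-2} + ⋯ + 2s·a_0 < a_s`. -/
theorem restricted_partitions_le_fib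
    (a : ℕ → ℕ) (ha : StrictMono a) (hpos : 0 < a 0)
    (hgrow : ∀ s : ℕ, 1 ≤ s → ∑ t ∈ Finset.Icc 1 s, 2 * t * a (s - t) < a s)
    (m n : ℕ) (hm : 1 ≤ m) (hn : 1 ≤ n) :
    Set.ncard {x : ℕ →₀ ℕ |
        x.sum (fun i c => c * a i) = m ∧ x.sum (fun _ c => c) ≤ n} ≤ Nat.fib n := by
  have hset : {x : ℕ →₀ ℕ | x.sum (fun i c => c * a i) = m ∧ x.sum (fun _ c => c) ≤ n}
      = RPF.S a (m+1) m n := by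
    ext x
    simp only [RPF.S, Set.mem_setOf_eq]
    constructor
    · rintro ⟨h1, h2⟩
      refine ⟨h1, h2, ?_⟩
      intro i hi
      have hWm : RPF.W a x = m := h1
      have hai : a i ≤ RPF.W a x := RPF.part_le_W ha hpos hi
      have hia : i ≤ a i := ha.le_apply
      omega
    · rintro ⟨h1, h2, _⟩
      exact ⟨h1, h2⟩
  rw [hset]
  exact (RPF.Key.key ha hpos hgrow n).2 (m+1) m hm
end

section
/- Let q ≥ 4 be an integer and A_q = {q^i : i ∈ ℕ} the set of powers of q. Then for all positive integers m and n, the number of partitions of m into at most n parts, each a power of q, is at most F(n). -/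
/-- Sum of Fibonacci numbers at indices descending by 2 is at most the next Fibonacci. -/
lemma fib_two_step_sum_le (E : ℕ) : ∀ M : ℕ,
    (∑ j ∈ Finset.range (E + 1), Nat.fib (M - 2 * j)) ≤ Nat.fib (M + 1) := by
  induction E with
  | zero =>
    intro M
    simpa using Nat.fib_mono (Nat.le_succ M)
  | succ E ih =>
    intro M
    match M with
    | 0 =>
      have : ∀ j ∈ Finset.range (E + 2), Nat.fib (0 - 2 * j) = 0 := by
        intro j _; simp [Nat.zero_sub]
      rw [Finset.sum_congr rfl this]
      simp
    | 1 =>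
      rw [Finset.sum_range_succ']
      have : ∀ j ∈ Finset.range (E + 1), Nat.fib (1 - 2 * (j + 1)) = 0 := by
        intro j _
        have : 1 - 2 * (j + 1) = 0 := by omega
        simp [this]
      rw [Finset.sum_congr rfl this]
      simp
    | (M + 2) =>
      rw [Finset.sum_range_succ']
      have h1 : ∀ j ∈ Finset.range (E + 1), Nat.fib (M + 2 - 2 * (j + 1)) = Nat.fib (M - 2 * j) := by
        intro j _; congr 1; omega
      rw [Finset.sum_congr rfl h1]
      have h2 := ih M
      have h3 : Nat.fib (M + 2 - 2 * 0) = Nat.fib (M + 2) := by norm_num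
      calc (∑ j ∈ Finset.range (E + 1), Nat.fib (M - 2 * j)) + Nat.fib (M + 2 - 2 * 0)
          ≤ Nat.fib (M + 1) + Nat.fib (M + 2) := by rw [h3]; exact Nat.add_le_add h2 le_rfl
        _ = Nat.fib (M + 3) := (Nat.fib_add_two).symm

lemma key_sum (q A c n : ℕ) (hq : 4 ≤ q) (hA : 1 ≤ A) (hc : c = A / q)
    (pb : ℕ → ℕ)
    (hlt : ∀ a < A, pb a ≤ Nat.fib ((n - a) - 3 * (A - a)))
    (hlast : pb A ≤ Nat.fib (n - A) ∨ (pb A ≤ if A ≤ n then 1 else 0)) :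
    (∑ a ∈ Finset.range (A + 1), pb a) ≤ Nat.fib (n - 3 * c) := by
  subst hc
  have hmod := Nat.div_add_mod A q
  have hcmul : 4 * (A / q) ≤ q * (A / q) := Nat.mul_le_mul_right _ hq
  have hA3 : 3 * (A / q) + 1 ≤ A := by omega
  rcases lt_trichotomy n A with hn | hn | hn
  · -- n < A : every term is zero
    have hz : ∀ a ∈ Finset.range (A + 1), pb a = 0 := by
      intro a ha
      rw [Finset.mem_range] at ha
      rcases lt_or_eq_of_le (Nat.lt_succ_iff.mp ha) with h | h
      · have := hlt a h
        have harg : (n - a) - 3 * (A - a) = 0 := by omega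
        rw [harg] at this
        simpa using this
      · subst h
        rcases hlast with h2 | h2
        · have : n - a = 0 := by omega
          rw [this] at h2; simpa using h2
        · rw [if_neg (by omega)] at h2; omega
    rw [Finset.sum_congr rfl hz]
    simp
  · -- n = A
    subst hn
    have hz : ∀ a ∈ Finset.range n, pb a = 0 := by
      intro a ha
      rw [Finset.mem_range] at ha
      have := hlt a ha
      have harg : (n - a) - 3 * (n - a) = 0 := by omega
      rw [harg] at this
      simpa using this
    rw [Finset.sum_range_succ, Finset.sum_congr rfl hz]
    have h1 : pb n ≤ 1 := by
      rcases hlast with h2 | h2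
      · have h0 : n - n = 0 := by omega
        rw [h0] at h2
        simp only [Nat.fib_zero, Nat.le_zero] at h2
        omega
      · rw [if_pos le_rfl] at h2; exact h2
    have h2 : 0 < Nat.fib (n - 3 * (n / q)) := Nat.fib_pos.mpr (by omega)
    simp only [Finset.sum_const_zero, zero_add]
    omega
  · -- n > A
    have hall : ∀ a ∈ Finset.range (A + 1), pb a ≤ Nat.fib ((n - a) - 3 * (A - a)) := by
      intro a ha
      rw [Finset.mem_range] at ha
      rcases lt_or_eq_of_le (Nat.lt_succ_iff.mp ha) with h | h
      · exact hlt a h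
      · subst h
        rcases hlast with h2 | h2
        · simpa using h2
        · rw [if_pos (by omega)] at h2
          have : 0 < Nat.fib ((n - a) - 3 * (a - a)) := Nat.fib_pos.mpr (by omega)
          omega
    calc (∑ a ∈ Finset.range (A + 1), pb a)
        ≤ ∑ a ∈ Finset.range (A + 1), Nat.fib ((n - a) - 3 * (A - a)) :=
          Finset.sum_le_sum hall
      _ = ∑ j ∈ Finset.range (A + 1), Nat.fib ((n - A) - 2 * j) := by
          rw [← Finset.sum_range_reflect (fun a => Nat.fib ((n - a) - 3 * (A - a))) (A + 1)]
          apply Finset.sum_congr rfl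
          intro j hj
          rw [Finset.mem_range] at hj
          congr 1
          omega
      _ ≤ Nat.fib ((n - A) + 1) := fib_two_step_sum_le A (n - A)
      _ ≤ Nat.fib (n - 3 * (A / q)) := Nat.fib_mono (by omega)


/-- Partitions of `N` into at most `n` parts, all powers `q^j` with `j < ℓ`. -/
def Dset (q ℓ N n : ℕ) : Set (ℕ →₀ ℕ) :=
  {x | x.sum (fun i c => c * q ^ i) = N ∧ x.sum (fun _ c => c) ≤ n ∧ ∀ j, ℓ ≤ j → x j = 0}

lemma finsupp_sum_erase (x : ℕ →₀ ℕ) (ℓ : ℕ) (g : ℕ → ℕ → ℕ) (hg : ∀ i, g i 0 = 0) :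
    x.sum g = g ℓ (x ℓ) + (Finsupp.erase ℓ x).sum g := by
  classical
  by_cases h : ℓ ∈ x.support
  · rw [Finsupp.sum, Finsupp.sum, Finsupp.support_erase, ← Finset.add_sum_erase _ _ h]
    congr 1
    apply Finset.sum_congr rfl
    intro i hi
    rw [Finsupp.erase_ne (Finset.ne_of_mem_erase hi)]
  · have hx : x ℓ = 0 := Finsupp.notMem_support_iff.mp h
    have he : Finsupp.erase ℓ x = x := by
      ext j
      rcases eq_or_ne j ℓ with rfl | hj
      · rw [Finsupp.erase_same, hx]
      · rw [Finsupp.erase_ne hj]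
    rw [hx, hg, zero_add, he]

lemma apply_mul_le_sum (q : ℕ) (x : ℕ →₀ ℕ) (ℓ : ℕ) :
    x ℓ * q ^ ℓ ≤ x.sum (fun i c => c * q ^ i) := by
  by_cases h : ℓ ∈ x.support
  · exact Finset.single_le_sum (f := fun i => x i * q ^ i) (fun i _ => Nat.zero_le _) h
  · simp [Finsupp.notMem_support_iff.mp h]

lemma apply_le_count (x : ℕ →₀ ℕ) (ℓ : ℕ) :
    x ℓ ≤ x.sum (fun _ c => c) := by
  by_cases h : ℓ ∈ x.support
  · exact Finset.single_le_sum (f := fun i => x i) (fun i _ => Nat.zero_le _) h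
  · simp [Finsupp.notMem_support_iff.mp h]

lemma Dset_N_zero (q ℓ n : ℕ) (hq : 1 ≤ q) : Dset q ℓ 0 n = {0} := by
  ext x
  simp only [Dset, Set.mem_setOf_eq, Set.mem_singleton_iff]
  constructor
  · rintro ⟨h1, -, -⟩
    ext i
    by_cases hi : i ∈ x.support
    · exfalso
      have hle := apply_mul_le_sum q x i
      rw [h1] at hle
      have hxi : x i ≠ 0 := Finsupp.mem_support_iff.mp hi
      have hqp : 0 < q ^ i := pow_pos hq i
      have : 0 < x i * q ^ i := Nat.mul_pos (Nat.pos_of_ne_zero hxi) hqp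
      omega
    · simpa using Finsupp.notMem_support_iff.mp hi
  · rintro rfl
    refine ⟨?_, ?_, ?_⟩ <;> simp

lemma ncard_range_biUnion_le {α : Type*} (k : ℕ) (t : ℕ → Set α) :
    (⋃ a ∈ Finset.range k, t a).ncard ≤ ∑ a ∈ Finset.range k, (t a).ncard := by
  induction k with
  | zero => simp
  | succ k ih =>
    have hu : (⋃ a ∈ Finset.range (k + 1), t a) = (⋃ a ∈ Finset.range k, t a) ∪ t k := by
      rw [Finset.range_add_one]
      push_cast [Finset.set_biUnion_insert]
      rw [Set.union_comm]
    rw [hu, Finset.sum_range_succ]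
    exact le_trans (Set.ncard_union_le _ _) (Nat.add_le_add ih le_rfl)

lemma Dset_finite_ncard_le (q : ℕ) (hq : 4 ≤ q) :
    ∀ ℓ N n : ℕ, 1 ≤ N →
      (Dset q ℓ N n).Finite ∧ (Dset q ℓ N n).ncard ≤ Nat.fib (n - 3 * (N / q ^ ℓ)) := by
  intro ℓ
  induction ℓ with
  | zero =>
    intro N n hN
    have hempty : Dset q 0 N n = ∅ := by
      ext x
      simp only [Dset, Set.mem_setOf_eq, Set.mem_empty_iff_false, iff_false]
      rintro ⟨h1, -, h3⟩
      have hx : x = 0 := by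
        ext j; exact h3 j (Nat.zero_le j)
      rw [hx, Finsupp.sum_zero_index] at h1
      omega
    rw [hempty]
    simp
  | succ ℓ ih =>
    intro N n hN
    have hqpow : 0 < q ^ ℓ := pow_pos (by omega) ℓ
    have hdiv : N / q ^ (ℓ + 1) = (N / q ^ ℓ) / q := by
      rw [pow_succ, ← Nat.div_div_eq_div_mul]
    set A := N / q ^ ℓ with hA
    have hxl_le : ∀ x ∈ Dset q (ℓ + 1) N n, x ℓ ≤ A := by
      intro x hx
      have hs := apply_mul_le_sum q x ℓ
      rw [hx.1] at hs
      exact (Nat.le_div_iff_mul_le hqpow).mpr hs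
    by_cases hA0 : A = 0
    · have hset : Dset q (ℓ + 1) N n = Dset q ℓ N n := by
        ext x
        constructor
        · rintro ⟨h1, h2, h3⟩
          refine ⟨h1, h2, fun j hj => ?_⟩
          rcases eq_or_lt_of_le hj with rfl | h
          · have := hxl_le x ⟨h1, h2, h3⟩
            omega
          · exact h3 j h
        · rintro ⟨h1, h2, h3⟩
          exact ⟨h1, h2, fun j hj => h3 j (by omega)⟩
      rw [hset, hdiv, hA0]
      have := ih N n hN
      rw [← hA, hA0] at this
      simpa using this
    · -- decomposition by the value of x ℓ
      have hA1 : 1 ≤ A := Nat.pos_of_ne_zero hA0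
      set P : ℕ → Set (ℕ →₀ ℕ) := fun a => {x ∈ Dset q (ℓ + 1) N n | x ℓ = a} with hP
      have hcover : Dset q (ℓ + 1) N n = ⋃ a ∈ Finset.range (A + 1), P a := by
        ext x
        simp only [hP, Set.mem_iUnion, Finset.mem_range, Set.mem_setOf_eq, exists_prop]
        constructor
        · intro hx
          exact ⟨x ℓ, by have := hxl_le x hx; omega, hx, rfl⟩
        · rintro ⟨a, -, hx, -⟩
          exact hx
      have hmaps : ∀ a, ∀ x ∈ P a, Finsupp.erase ℓ x ∈ Dset q ℓ (N - a * q ^ ℓ) (n - a) := by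
        rintro a x ⟨⟨h1, h2, h3⟩, hxa⟩
        have he1 : x.sum (fun i c => c * q ^ i)
            = x ℓ * q ^ ℓ + (Finsupp.erase ℓ x).sum (fun i c => c * q ^ i) :=
          finsupp_sum_erase x ℓ _ (by intro i; simp)
        have he2 : x.sum (fun _ c => c)
            = x ℓ + (Finsupp.erase ℓ x).sum (fun _ c => c) :=
          finsupp_sum_erase x ℓ _ (fun i => rfl)
        rw [h1, hxa] at he1
        rw [hxa] at he2
        refine ⟨?_, ?_, ?_⟩
        · omega
        · omega
        · intro j hj
          rcases eq_or_lt_of_le hj with rfl | h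
          · exact Finsupp.erase_same
          · rw [Finsupp.erase_ne (by omega : j ≠ ℓ)]
            exact h3 j h
      have hinj : ∀ a, Set.InjOn (Finsupp.erase ℓ) (P a) := by
        rintro a x ⟨-, hxa⟩ y ⟨-, hya⟩ hxy
        ext j
        rcases eq_or_ne j ℓ with rfl | hj
        · rw [hxa, hya]
        · have := congrArg (fun z => z j) hxy
          simpa [Finsupp.erase_ne hj] using this
      have hpiece : ∀ a ≤ A, (P a).Finite ∧
          ((N - a * q ^ ℓ = 0 → (P a).ncard ≤ if A ≤ n then 1 else 0) ∧
           (1 ≤ N - a * q ^ ℓ → (P a).ncard ≤ Nat.fib ((n - a) - 3 * (A - a)))) := by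
        intro a ha
        rcases Nat.eq_zero_or_pos (N - a * q ^ ℓ) with h0 | h0
        · have htgt : Dset q ℓ (N - a * q ^ ℓ) (n - a) = {0} := by
            rw [h0]; exact Dset_N_zero q ℓ (n - a) (by omega)
          have hfin : (P a).Finite := by
            apply Set.Finite.of_finite_image _ (hinj a)
            apply Set.Finite.subset (Set.finite_singleton (0 : ℕ →₀ ℕ))
            rintro y ⟨x, hx, rfl⟩
            have := hmaps a x hx
            rw [htgt] at this
            exact this
          refine ⟨hfin, fun _ => ?_, fun h => absurd h (by omega)⟩
          by_cases hn : A ≤ n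
          · rw [if_pos hn]
            have := Set.ncard_le_ncard_of_injOn (Finsupp.erase ℓ) (hmaps a) (hinj a)
              (by rw [htgt]; exact Set.finite_singleton _)
            rw [htgt, Set.ncard_singleton] at this
            exact this
          · rw [if_neg hn]
            -- here a = A > n, so P a is empty
            have ha' : a = A := by
              have : a * q ^ ℓ ≤ N := (Nat.le_div_iff_mul_le hqpow).mp ha
              have hN' : N = a * q ^ ℓ := by omega
              have : A = a := by
                rw [hA, hN', Nat.mul_div_cancel _ hqpow]
              omega
            have : P a = ∅ := by
              ext x
              simp only [hP, Set.mem_setOf_eq, Set.mem_empty_iff_false, iff_false, not_and]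
              rintro ⟨-, h2, -⟩ hxa
              have := apply_le_count x ℓ
              omega
            rw [this]
            simp
        · have hle : a * q ^ ℓ ≤ N := (Nat.le_div_iff_mul_le hqpow).mp ha
          have hdivsub : (N - a * q ^ ℓ) / q ^ ℓ = A - a := by
            rw [mul_comm a (q ^ ℓ), Nat.sub_mul_div, ← hA]
          obtain ⟨hfin, hcard⟩ := ih (N - a * q ^ ℓ) (n - a) h0
          rw [hdivsub] at hcard
          have hfinP : (P a).Finite := by
            apply Set.Finite.of_finite_image _ (hinj a)
            apply Set.Finite.subset hfin
            rintro y ⟨x, hx, rfl⟩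
            exact hmaps a x hx
          refine ⟨hfinP, fun h => absurd h (by omega), fun _ => ?_⟩
          exact le_trans (Set.ncard_le_ncard_of_injOn (Finsupp.erase ℓ) (hmaps a) (hinj a) hfin)
            hcard
      constructor
      · rw [hcover]
        apply Set.Finite.biUnion (Finset.finite_toSet _)
        intro a ha
        have ha' : a ≤ A := by
          have := Finset.mem_range.mp (Finset.mem_coe.mp ha)
          omega
        exact (hpiece a ha').1
      · rw [hcover, hdiv]
        refine le_trans (ncard_range_biUnion_le (A + 1) P) ?_
        apply key_sum q A (A / q) n hq hA1 rfl
        · intro a ha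
          have h0 : 1 ≤ N - a * q ^ ℓ := by
            have h1 : (a + 1) * q ^ ℓ ≤ N := (Nat.le_div_iff_mul_le hqpow).mp (by omega)
            have h2 : 1 * q ^ ℓ ≤ (a + 1) * q ^ ℓ - a * q ^ ℓ := by
              rw [Nat.add_mul]; omega
            omega
          exact ((hpiece a ha.le).2.2) h0
        · rcases Nat.eq_zero_or_pos (N - A * q ^ ℓ) with h0 | h0
          · right
            exact ((hpiece A le_rfl).2.1) h0
          · left
            have := ((hpiece A le_rfl).2.2) h0
            simpa using this

theorem qary_partitions_le_fib (q : ℕ) (hq : 4 ≤ q) (m n : ℕ) (hm : 1 ≤ m) (hn : 1 ≤ n) :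
    Set.ncard {x : ℕ →₀ ℕ |
        x.sum (fun i c => c * q ^ i) = m ∧ x.sum (fun _ c => c) ≤ n} ≤ Nat.fib n := by
  have hq1 : 1 < q := by omega
  have hmp : m < q ^ m := Nat.lt_pow_self hq1
  have hset : {x : ℕ →₀ ℕ | x.sum (fun i c => c * q ^ i) = m ∧ x.sum (fun _ c => c) ≤ n}
      = Dset q m m n := by
    ext x
    simp only [Dset, Set.mem_setOf_eq]
    constructor
    · rintro ⟨h1, h2⟩
      refine ⟨h1, h2, fun j hj => ?_⟩
      by_contra hne
      have h4 : 1 * q ^ j ≤ x j * q ^ j := Nat.mul_le_mul_right _ (by omega)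
      have h5 := apply_mul_le_sum q x j
      rw [h1] at h5
      have h6 : q ^ m ≤ q ^ j := Nat.pow_le_pow_right (by omega) hj
      omega
    · rintro ⟨h1, h2, -⟩
      exact ⟨h1, h2⟩
  rw [hset]
  have := (Dset_finite_ncard_le q hq m m n hm).2
  rwa [Nat.div_eq_of_lt hmp, Nat.mul_zero, Nat.sub_zero] at this
end

section
/- For q ∈ {2, 3} and all positive integers m, n, the number of partitions of m into at most n parts, each a power of q, is at most F(2n-1). -/
def Mf : ℕ → ℕ → ℕ
  | 0, _ => 1
  | d+1, s => Mf d s + ∑ t ∈ (Finset.range s).attach, Mf (d+1) t.1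
termination_by d s => (d, s)
decreasing_by
  · exact Prod.Lex.left _ _ (Nat.lt_succ_self d)
  · exact Prod.Lex.right _ (Finset.mem_range.mp t.2)

lemma Mf_zero (s : ℕ) : Mf 0 s = 1 := by rw [Mf]

lemma Mf_succ (d s : ℕ) : Mf (d+1) s = Mf d s + ∑ t ∈ Finset.range s, Mf (d+1) t := by
  rw [Mf]
  congr 1
  exact Finset.sum_attach _ _

lemma Mf_pos (d s : ℕ) : 1 ≤ Mf d s := by
  induction d with
  | zero => simp [Mf_zero]
  | succ d ih => rw [Mf_succ]; exact le_add_right (ih)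

lemma Mf_mono_left (d s : ℕ) : Mf d s ≤ Mf (d+1) s := by
  rw [Mf_succ]; exact Nat.le_add_right _ _

lemma fib_sum_odd (a : ℕ) : ∀ s : ℕ,
    (∑ t ∈ Finset.range s, Nat.fib (2*(a+t)+1)) + Nat.fib (2*a) = Nat.fib (2*(a+s)) := by
  intro s
  induction s with
  | zero => simp
  | succ s ih =>
    rw [Finset.sum_range_succ]
    have h2 : 2*(a+(s+1)) = (2*(a+s)) + 2 := by ring
    rw [h2, Nat.fib_add_two]
    omega

lemma Mf_le_fib : ∀ d s, Mf (d+1) s ≤ Nat.fib (2*(d+s)+1) := by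
  intro d
  induction d with
  | zero =>
    intro s
    induction s using Nat.strong_induction_on with
    | _ s ih =>
      rw [Mf_succ, Mf_zero]
      simp only [Nat.zero_add]
      have h1 : ∑ t ∈ Finset.range s, Mf 1 t ≤ ∑ t ∈ Finset.range s, Nat.fib (2*t+1) := by
        apply Finset.sum_le_sum
        intro t ht
        simpa using ih t (Finset.mem_range.mp ht)
      have h2 := fib_sum_odd 0 s
      simp only [Nat.mul_zero, Nat.zero_add, Nat.fib_zero, Nat.add_zero] at h2
      have h2' : ∑ t ∈ Finset.range s, Mf 1 t ≤ Nat.fib (2*s) := h2 ▸ h1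
      rcases Nat.eq_zero_or_pos s with hs | hs
      · subst hs; simp [Mf_zero]
      · have h3 : 1 ≤ Nat.fib (2*s - 1) := by
          have := Nat.fib_pos.mpr (show 0 < 2*s - 1 by omega)
          omega
        have h4 : Nat.fib (2*s+1) = Nat.fib (2*s) + Nat.fib (2*s-1) := by
          have : 2*s+1 = (2*s-1)+2 := by omega
          rw [this, Nat.fib_add_two]
          have h5 : 2*s-1+1 = 2*s := by omega
          rw [h5]
          omega
        omega
  | succ d ihd =>
    intro s
    induction s using Nat.strong_induction_on with
    | _ s ih =>
      rw [Mf_succ]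
      have h1 : ∑ t ∈ Finset.range s, Mf (d+1+1) t
          ≤ ∑ t ∈ Finset.range s, Nat.fib (2*((d+1)+t)+1) := by
        apply Finset.sum_le_sum
        intro t ht
        exact ih t (Finset.mem_range.mp ht)
      have h2 := fib_sum_odd (d+1) s
      have h3 := ihd s
      have h4 : Nat.fib (2*((d+1)+s)+1) = Nat.fib (2*((d+1)+s)) + Nat.fib (2*(d+s)+1) := by
        have he : 2*((d+1)+s)+1 = (2*(d+s)+1)+2 := by ring
        rw [he, Nat.fib_add_two]
        have : 2*(d+s)+1+1 = 2*((d+1)+s) := by ring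
        rw [this]
        omega
      omega

/-- digit sum of `V` in base `q` over positions `< ℓ` -/
def dsumf (q ℓ V : ℕ) : ℕ := ∑ i ∈ Finset.range ℓ, V / q^i % q

/-- number of nonzero digits of `V` in base `q` over positions `< ℓ` -/
def dcntf (q ℓ V : ℕ) : ℕ := ∑ i ∈ Finset.range ℓ, min (V / q^i % q) 1

/-- minimal number of parts: top coefficient plus digit sum below -/
def muf (q ℓ V : ℕ) : ℕ := V / q^ℓ + dsumf q ℓ V

/-- partitions of `V` into at most `β` parts, all powers `q^i` with `i < ℓ` -/
def PS (q ℓ V β : ℕ) : Set (ℕ →₀ ℕ) :=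
  {x | (∀ i, ℓ ≤ i → x i = 0) ∧ x.sum (fun i c => c * q ^ i) = V ∧ x.sum (fun _ c => c) ≤ β}

lemma sum_split (x : ℕ →₀ ℕ) (a : ℕ) (g : ℕ → ℕ → ℕ) (h0 : ∀ i, g i 0 = 0)
    (hadd : ∀ i b c, g i (b + c) = g i b + g i c) :
    x.sum g = g a (x a) + (x.erase a).sum g := by
  conv_lhs => rw [← Finsupp.erase_add_single a x]
  rw [Finsupp.sum_add_index' h0 hadd, Finsupp.sum_single_index (h0 a)]
  exact Nat.add_comm _ _

lemma le_sum_card (x : ℕ →₀ ℕ) (i : ℕ) : x i ≤ x.sum (fun _ c => c) := by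
  rw [sum_split x i (fun _ c => c) (fun _ => rfl) (fun _ _ _ => rfl)]
  exact Nat.le_add_right _ _

lemma le_sum_val (q : ℕ) (x : ℕ →₀ ℕ) (i : ℕ) :
    x i * q ^ i ≤ x.sum (fun i c => c * q ^ i) := by
  rw [sum_split x i (fun i c => c * q ^ i) (fun _ => Nat.zero_mul _)
    (fun _ _ _ => Nat.add_mul _ _ _)]
  exact Nat.le_add_right _ _

lemma PS_finite (q ℓ V β : ℕ) : (PS q ℓ V β).Finite := by
  apply Set.Finite.of_finite_image (f := fun x => fun i : Fin ℓ => (⟨min (x i) β, by omega⟩ : Fin (β+1)))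
  · exact Set.toFinite _
  · intro x hx y hy hxy
    ext i
    by_cases hi : i < ℓ
    · have := congrFun hxy ⟨i, hi⟩
      simp only [Fin.mk.injEq] at this
      have hxb : x i ≤ β := (le_sum_card x i).trans hx.2.2
      have hyb : y i ≤ β := (le_sum_card y i).trans hy.2.2
      omega
    · rw [hx.1 i (by omega), hy.1 i (by omega)]

lemma digit_add_high (q : ℕ) (hq : 0 < q) (i L V a : ℕ) (h : i < L) :
    (V + a * q^L) / q^i % q = V / q^i % q := by
  have h1 : a * q^L = q^i * (a * q^(L-i-1) * q) := by
    obtain ⟨k, rfl⟩ : ∃ k, L = i + k + 1 := ⟨L - i - 1, by omega⟩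
    have hk : i + k + 1 - i - 1 = k := by omega
    rw [hk]
    ring
  rw [h1, Nat.add_mul_div_left _ _ (Nat.pow_pos (n := i) hq)]
  exact Nat.add_mul_mod_self_right _ _ _

lemma dsumf_add_high (q : ℕ) (hq : 0 < q) (ℓ L V a : ℕ) (h : ℓ ≤ L) :
    dsumf q ℓ (V + a * q^L) = dsumf q ℓ V := by
  unfold dsumf
  apply Finset.sum_congr rfl
  intro i hi
  exact digit_add_high q hq i L V a (by have := Finset.mem_range.mp hi; omega)

lemma dcntf_add_high (q : ℕ) (hq : 0 < q) (ℓ L V a : ℕ) (h : ℓ ≤ L) :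
    dcntf q ℓ (V + a * q^L) = dcntf q ℓ V := by
  unfold dcntf
  apply Finset.sum_congr rfl
  intro i hi
  rw [digit_add_high q hq i L V a (by have := Finset.mem_range.mp hi; omega)]

lemma dsumf_succ (q ℓ V : ℕ) : dsumf q (ℓ+1) V = dsumf q ℓ V + V / q^ℓ % q :=
  Finset.sum_range_succ _ _

lemma dcntf_succ (q ℓ V : ℕ) : dcntf q (ℓ+1) V = dcntf q ℓ V + min (V / q^ℓ % q) 1 :=
  Finset.sum_range_succ _ _

lemma div_add_high (q : ℕ) (hq : 0 < q) (i L V a : ℕ) (h : i ≤ L) :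
    (V + a * q^L) / q^i = V / q^i + a * q^(L-i) := by
  have h1 : a * q^L = q^i * (a * q^(L-i)) := by
    obtain ⟨k, rfl⟩ : ∃ k, L = i + k := ⟨L - i, by omega⟩
    have hk : i + k - i = k := by omega
    rw [hk]; ring
  rw [h1, Nat.add_mul_div_left _ _ (Nat.pow_pos (n := i) hq)]

lemma top_split (q : ℕ) (hq : 0 < q) (ℓ V : ℕ) :
    V / q^ℓ = q * (V / q^(ℓ+1)) + V / q^ℓ % q := by
  have h1 : V / q^ℓ / q = V / q^(ℓ+1) := by
    rw [Nat.div_div_eq_div_mul, ← pow_succ]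
  rw [← h1]
  exact (Nat.div_add_mod _ _).symm

lemma minparts (q : ℕ) (hq : 2 ≤ q) :
    ∀ ℓ (x : ℕ →₀ ℕ), (∀ i, ℓ + 1 ≤ i → x i = 0) →
      muf q ℓ (x.sum (fun i c => c * q ^ i)) ≤ x.sum (fun _ c => c) := by
  intro ℓ
  induction ℓ with
  | zero =>
    intro x hx
    have hx0 : x = Finsupp.single 0 (x 0) := by
      ext i
      rcases Nat.eq_zero_or_pos i with hi | hi
      · subst hi; simp
      · rw [hx i (by omega), Finsupp.single_apply_eq_zero.mpr (fun h => by omega)]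
    rw [hx0, Finsupp.sum_single_index (by simp), Finsupp.sum_single_index (by simp)]
    simp [muf, dsumf]
  | succ ℓ ih =>
    intro x hx
    set a := x (ℓ+1) with ha
    set x' := x.erase (ℓ+1) with hx'
    have hsupp : ∀ i, ℓ + 1 ≤ i → x' i = 0 := by
      intro i hi
      rcases Nat.eq_or_lt_of_le hi with h | h
      · rw [hx', ← h]; simp
      · rw [hx', Finsupp.erase_ne (by omega)]; exact hx i (by omega)
    have hval : x.sum (fun i c => c * q ^ i) =
        x'.sum (fun i c => c * q ^ i) + a * q^(ℓ+1) := by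
      rw [sum_split x (ℓ+1) (fun i c => c * q ^ i) (fun _ => Nat.zero_mul _)
        (fun _ _ _ => Nat.add_mul _ _ _)]
      exact Nat.add_comm _ _
    have hcard : x.sum (fun _ c => c) = a + x'.sum (fun _ c => c) := by
      rw [sum_split x (ℓ+1) (fun _ c => c) (fun _ => rfl) (fun _ _ _ => rfl)]
    have hih := ih x' hsupp
    set V' := x'.sum (fun i c => c * q ^ i) with hV'
    -- arithmetic: muf q (ℓ+1) (V' + a * q^(ℓ+1)) ≤ a + muf q ℓ V'
    have harith : muf q (ℓ+1) (V' + a * q^(ℓ+1)) ≤ a + muf q ℓ V' := by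
      unfold muf
      rw [div_add_high q (by omega) (ℓ+1) (ℓ+1) V' a le_rfl]
      simp only [Nat.sub_self, pow_zero, Nat.mul_one]
      rw [dsumf_add_high q (by omega) (ℓ+1) (ℓ+1) V' a le_rfl, dsumf_succ]
      have h2 := top_split q (by omega) ℓ V'
      have h3 : V' / q^ℓ % q ≤ V' / q^ℓ ∧ V' / q^(ℓ+1) + V' / q^ℓ % q ≤ V' / q^ℓ := by
        constructor
        · exact Nat.mod_le _ _
        · have hq2 : q * (V' / q^(ℓ+1)) ≥ V' / q^(ℓ+1) := Nat.le_mul_of_pos_left _ (by omega)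
          omega
      omega
    rw [hval, hcard]
    calc muf q (ℓ+1) (V' + a * q^(ℓ+1)) ≤ a + muf q ℓ V' := harith
      _ ≤ a + x'.sum (fun _ c => c) := by omega

lemma PS_empty (q : ℕ) (hq : 2 ≤ q) (ℓ V β : ℕ) (h : β < muf q ℓ V) :
    PS q (ℓ+1) V β = ∅ := by
  ext x
  simp only [Set.mem_empty_iff_false, iff_false]
  intro hx
  have h1 := minparts q hq ℓ x hx.1
  rw [hx.2.1] at h1
  have := hx.2.2
  omega

lemma star (q : ℕ) (hq : 2 ≤ q) (d s T b : ℕ) :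
    ∑ c ∈ Finset.range (T+1), (if c ≤ s then Mf (d + min (q*c+b) 1) (s-c) else 0)
      ≤ Mf (d + min b 1 + min T 1) s := by
  rcases Nat.eq_zero_or_pos T with hT | hT
  · subst hT
    simp only [Finset.sum_range_one, Nat.mul_zero, Nat.zero_add, Nat.le_refl, if_true,
      Nat.sub_zero, Nat.min_self, Nat.zero_le, true_and]
    simp
  · rw [Finset.sum_range_succ']
    have hmin : ∀ i : ℕ, min (q*(i+1)+b) 1 = 1 := by
      intro i
      have : q*(i+1) ≥ 2 := by
        calc 2 ≤ q := hq
        _ = q * 1 := (Nat.mul_one q).symm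
        _ ≤ q * (i+1) := Nat.mul_le_mul_left q (by omega)
      omega
    have hsum : (∑ i ∈ Finset.range T, if i+1 ≤ s then Mf (d + min (q*(i+1)+b) 1) (s-(i+1)) else 0)
        ≤ ∑ t ∈ Finset.range s, Mf (d+1) t := by
      have hrw : (∑ i ∈ Finset.range T, if i+1 ≤ s then Mf (d + min (q*(i+1)+b) 1) (s-(i+1)) else 0)
          = ∑ i ∈ (Finset.range T).filter (fun i => i+1 ≤ s), Mf (d+1) (s-(i+1)) := by
        rw [Finset.sum_filter]
        apply Finset.sum_congr rfl
        intro i _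
        rw [hmin i]
      rw [hrw]
      have himg : ∑ i ∈ (Finset.range T).filter (fun i => i+1 ≤ s), Mf (d+1) (s-(i+1))
          = ∑ t ∈ ((Finset.range T).filter (fun i => i+1 ≤ s)).image (fun i => s-(i+1)),
              Mf (d+1) t := by
        rw [Finset.sum_image]
        intro i hi j hj hij
        simp only [Finset.mem_coe, Finset.mem_filter, Finset.mem_range] at hi hj hij
        omega
      rw [himg]
      apply Finset.sum_le_sum_of_subset
      intro t ht
      simp only [Finset.mem_image, Finset.mem_filter, Finset.mem_range] at ht
      obtain ⟨i, ⟨_, hi2⟩, rfl⟩ := ht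
      exact Finset.mem_range.mpr (by omega)
    have hmin0 : min (q*0+b) 1 = min b 1 := by norm_num
    have hminT : min T 1 = 1 := by omega
    rw [hminT]
    rcases Nat.eq_zero_or_pos b with hb | hb
    · subst hb
      simp only [Nat.zero_min]
      have hc0 : (if 0 ≤ s then Mf (d + min (q*0+0) 1) (s-0) else 0) = Mf d s := by
        simp
      rw [hc0]
      have : Mf (d + 0 + 1) s = Mf d s + ∑ t ∈ Finset.range s, Mf (d+1) t := by
        rw [Nat.add_zero]; exact Mf_succ d s
      omega
    · have hminb : min b 1 = 1 := by omega
      have hc0 : (if 0 ≤ s then Mf (d + min (q*0+b) 1) (s-0) else 0) = Mf (d+1) s := by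
        simp [hminb]
      rw [hc0, hminb]
      have h2 : ∑ t ∈ Finset.range s, Mf (d+1) t ≤ ∑ t ∈ Finset.range s, Mf (d+1+1) t :=
        Finset.sum_le_sum (fun t _ => Mf_mono_left (d+1) t)
      have h3 : Mf (d+1+1) s = Mf (d+1) s + ∑ t ∈ Finset.range s, Mf (d+1+1) t := Mf_succ (d+1) s
      omega

lemma cnt (q : ℕ) (hq : 2 ≤ q) : ∀ ℓ V β,
    (PS q (ℓ+1) V β).ncard ≤
      Mf (dcntf q ℓ V + min (V / q^ℓ) 1) ((β - muf q ℓ V) / (q-1)) := by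
  intro ℓ
  induction ℓ with
  | zero =>
    intro V β
    have h1 : (PS q 1 V β).ncard ≤ 1 := by
      rw [Set.ncard_le_one (PS_finite q 1 V β)]
      have key : ∀ z : ℕ →₀ ℕ, z ∈ PS q 1 V β → z = Finsupp.single 0 V := by
        intro z hz
        have hz0 : z = Finsupp.single 0 (z 0) := by
          ext i
          rcases Nat.eq_zero_or_pos i with hi | hi
          · subst hi; simp
          · rw [hz.1 i (by omega), Finsupp.single_apply_eq_zero.mpr (fun h => by omega)]
        have hv : z.sum (fun i c => c * q ^ i) = z 0 := by
          rw [hz0, Finsupp.sum_single_index (by simp)]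
          simp
        rw [hz.2.1] at hv
        rw [hz0, ← hv]
      intro x hx y hy
      rw [key x hx, key y hy]
    exact h1.trans (Mf_pos _ _)
  | succ ℓ ih =>
    intro V β
    by_cases hβ0 : β < muf q (ℓ+1) V
    · rw [PS_empty q hq (ℓ+1) V β hβ0]
      simp
    push_neg at hβ0
    classical
    set T := V / q^(ℓ+1) with hT
    set bb := V / q^ℓ % q with hbb
    set ds := dsumf q ℓ V with hds
    set D := dcntf q ℓ V with hD
    have hq1 : 0 < q - 1 := by omega
    have hqpos : 0 < q := by omega
    have hmu : muf q (ℓ+1) V = T + (ds + bb) := by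
      unfold muf
      rw [dsumf_succ]
    set slk := β - (T + (ds + bb)) with hslk
    set sp := slk / (q-1) with hsp
    -- fibers
    set Fib : ℕ → Set (ℕ →₀ ℕ) := fun j => {x ∈ PS q (ℓ+1+1) V β | x (ℓ+1) = j} with hFib
    have hfibsub : ∀ j, Fib j ⊆ PS q (ℓ+1+1) V β := fun j x hx => hx.1
    have hSfin := PS_finite q (ℓ+1+1) V β
    have hFibFin : ∀ j, (Fib j).Finite := fun j => hSfin.subset (hfibsub j)
    -- each x has x (ℓ+1) ≤ T
    have hxT : ∀ x ∈ PS q (ℓ+1+1) V β, x (ℓ+1) ≤ T := by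
      intro x hx
      have h1 : x (ℓ+1) * q^(ℓ+1) ≤ V := by
        rw [← hx.2.1]
        exact le_sum_val q x (ℓ+1)
      rw [hT]
      exact (Nat.le_div_iff_mul_le (Nat.pow_pos (n := ℓ+1) hqpos)).mpr h1
    -- fiber injects into smaller PS
    have hfibbound : ∀ j, (Fib j).ncard ≤ (PS q (ℓ+1) (V - j*q^(ℓ+1)) (β - j)).ncard := by
      intro j
      have hinj : Set.InjOn (Finsupp.erase (ℓ+1)) (Fib j) := by
        intro x hx y hy hxy
        ext i
        by_cases hi : i = ℓ+1
        · rw [hi, hx.2, hy.2]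
        · have := congrFun (congrArg (fun f : ℕ →₀ ℕ => (f : ℕ → ℕ)) hxy) i
          simpa [Finsupp.erase_ne hi] using this
      have himg : Finsupp.erase (ℓ+1) '' (Fib j) ⊆ PS q (ℓ+1) (V - j*q^(ℓ+1)) (β - j) := by
        rintro _ ⟨x, hx, rfl⟩
        have hj : x (ℓ+1) = j := hx.2
        have hxPS := hx.1
        have hval : x.sum (fun i c => c * q ^ i) =
            j * q^(ℓ+1) + (x.erase (ℓ+1)).sum (fun i c => c * q ^ i) := by
          rw [sum_split x (ℓ+1) (fun i c => c * q ^ i) (fun _ => Nat.zero_mul _)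
            (fun _ _ _ => Nat.add_mul _ _ _), hj]
        have hcard : x.sum (fun _ c => c) = j + (x.erase (ℓ+1)).sum (fun _ c => c) := by
          rw [sum_split x (ℓ+1) (fun _ c => c) (fun _ => rfl) (fun _ _ _ => rfl), hj]
        refine ⟨?_, ?_, ?_⟩
        · intro i hi
          by_cases hieq : i = ℓ+1
          · rw [hieq]; simp
          · rw [Finsupp.erase_ne hieq]
            exact hxPS.1 i (by omega)
        · have h2 := hxPS.2.1
          omega
        · have h2 := hxPS.2.2
          omega
      calc (Fib j).ncard = (Finsupp.erase (ℓ+1) '' (Fib j)).ncard :=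
            (Set.ncard_image_of_injOn hinj).symm
        _ ≤ _ := Set.ncard_le_ncard himg (PS_finite _ _ _ _)
    -- big set splits over fibers
    have hsplit : (PS q (ℓ+1+1) V β).ncard ≤
        ∑ j ∈ Finset.range (T+1), (PS q (ℓ+1) (V - j*q^(ℓ+1)) (β - j)).ncard := by
      have hsub : hSfin.toFinset ⊆
          (Finset.range (T+1)).biUnion (fun j => (hFibFin j).toFinset) := by
        intro x hx
        rw [Set.Finite.mem_toFinset] at hx
        rw [Finset.mem_biUnion]
        exact ⟨x (ℓ+1), Finset.mem_range.mpr (by have := hxT x hx; omega),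
          (hFibFin _).mem_toFinset.mpr ⟨hx, rfl⟩⟩
      calc (PS q (ℓ+1+1) V β).ncard = hSfin.toFinset.card :=
            Set.ncard_eq_toFinset_card _ hSfin
        _ ≤ ((Finset.range (T+1)).biUnion (fun j => (hFibFin j).toFinset)).card :=
            Finset.card_le_card hsub
        _ ≤ ∑ j ∈ Finset.range (T+1), (hFibFin j).toFinset.card := Finset.card_biUnion_le
        _ = ∑ j ∈ Finset.range (T+1), (Fib j).ncard := by
            apply Finset.sum_congr rfl
            intro j _
            exact (Set.ncard_eq_toFinset_card _ (hFibFin j)).symm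
        _ ≤ _ := Finset.sum_le_sum (fun j _ => hfibbound j)
    -- bound each summand
    have hperj : ∀ j ∈ Finset.range (T+1),
        (PS q (ℓ+1) (V - j*q^(ℓ+1)) (β - j)).ncard ≤
          (if T - j ≤ sp then Mf (D + min (q*(T-j)+bb) 1) (sp - (T-j)) else 0) := by
      intro j hj
      have hjT : j ≤ T := by have := Finset.mem_range.mp hj; omega
      set c := T - j with hc
      have hTc : T = c + j := by omega
      set Vj := V - j*q^(ℓ+1) with hVj
      have hjV : j * q^(ℓ+1) ≤ V := by
        calc j * q^(ℓ+1) ≤ T * q^(ℓ+1) := Nat.mul_le_mul_right _ hjT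
          _ ≤ V := by rw [hT]; exact Nat.div_mul_le_self _ _
      have hVeq : V = Vj + j * q^(ℓ+1) := by omega
      have hdig : dsumf q ℓ Vj = ds := by
        rw [hds, hVeq, dsumf_add_high q hqpos ℓ (ℓ+1) Vj j (by omega)]
      have hdc : dcntf q ℓ Vj = D := by
        rw [hD, hVeq, dcntf_add_high q hqpos ℓ (ℓ+1) Vj j (by omega)]
      have htop : Vj / q^ℓ = q*c + bb := by
        have h1 : V / q^ℓ = Vj / q^ℓ + j * q := by
          conv_lhs => rw [hVeq]
          rw [div_add_high q hqpos ℓ (ℓ+1) Vj j (by omega)]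
          congr 2
          rw [show ℓ+1-ℓ = 1 by omega, pow_one]
        have h2 : V / q^ℓ = q * T + bb := top_split q hqpos ℓ V
        have h3 : q * T = q * c + q * j := by rw [hTc]; ring
        have h4 : j * q = q * j := Nat.mul_comm _ _
        omega
      have hmuVj : muf q ℓ Vj = q*c + bb + ds := by
        unfold muf
        rw [htop, hdig]
      have hqc : q * c = (q-1) * c + c := by
        have : (q-1) + 1 = q := by omega
        calc q * c = ((q-1)+1) * c := by rw [this]
          _ = (q-1) * c + c := by rw [Nat.add_mul, Nat.one_mul]
      by_cases hfeas : (q-1) * c ≤ slk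
      · -- feasible
        have hcs : c ≤ sp := by
          rw [hsp]
          exact (Nat.le_div_iff_mul_le hq1).mpr (by rw [Nat.mul_comm]; exact hfeas)
        rw [if_pos hcs]
        have hIH := ih Vj (β - j)
        rw [hdc, htop, hmuVj] at hIH
        have hslkj : β - j - (q*c + bb + ds) = slk - (q-1)*c := by omega
        have hdiv : (slk - (q-1)*c) / (q-1) = sp - c := by
          rw [hsp]
          exact Nat.sub_mul_div _ _ _
        rw [hslkj, hdiv] at hIH
        exact hIH
      · -- infeasible: empty
        push_neg at hfeas
        rw [if_neg (by
          intro hcs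
          have : c * (q-1) ≤ slk := (Nat.le_div_iff_mul_le hq1).mp (hsp ▸ hcs)
          rw [Nat.mul_comm] at this
          omega)]
        have hempty : β - j < muf q ℓ Vj := by
          rw [hmuVj]
          omega
        rw [PS_empty q hq ℓ Vj (β - j) hempty]
        simp
    -- combine
    calc (PS q (ℓ+1+1) V β).ncard
        ≤ ∑ j ∈ Finset.range (T+1), (PS q (ℓ+1) (V - j*q^(ℓ+1)) (β - j)).ncard := hsplit
      _ ≤ ∑ j ∈ Finset.range (T+1),
            (if T - j ≤ sp then Mf (D + min (q*(T-j)+bb) 1) (sp - (T-j)) else 0) :=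
          Finset.sum_le_sum hperj
      _ = ∑ c ∈ Finset.range (T+1),
            (if c ≤ sp then Mf (D + min (q*c+bb) 1) (sp - c) else 0) := by
          have hrefl := Finset.sum_range_reflect
            (fun c => if c ≤ sp then Mf (D + min (q*c+bb) 1) (sp - c) else 0) (T+1)
          simp only [Nat.add_sub_cancel] at hrefl
          exact hrefl
      _ ≤ Mf (D + min bb 1 + min T 1) sp := star q hq D sp T bb
      _ = Mf (dcntf q (ℓ+1) V + min (V / q^(ℓ+1)) 1) ((β - muf q (ℓ+1) V) / (q-1)) := by
          rw [dcntf_succ, hmu]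

lemma eq_zero_of_digits (q : ℕ) (hq : 2 ≤ q) :
    ∀ ℓ V, (∀ i, i < ℓ → V / q^i % q = 0) → V / q^ℓ = 0 → V = 0 := by
  intro ℓ
  induction ℓ with
  | zero =>
    intro V _ h
    rw [pow_zero, Nat.div_one] at h
    exact h
  | succ ℓ ih =>
    intro V hdig htop
    have h0 : V % q = 0 := by
      have := hdig 0 (by omega)
      simpa using this
    have hV' : ∀ i, i < ℓ → (V / q) / q^i % q = 0 := by
      intro i hi
      rw [Nat.div_div_eq_div_mul, ← pow_succ']
      exact hdig (i+1) (by omega)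
    have hV'top : (V / q) / q^ℓ = 0 := by
      rw [Nat.div_div_eq_div_mul, ← pow_succ']
      exact htop
    have hvq := ih (V / q) hV' hV'top
    have hdm := Nat.div_add_mod V q
    rw [hvq, Nat.mul_zero] at hdm
    omega

theorem qary_partitions_le_fib_small (q : ℕ) (hq : q = 2 ∨ q = 3)
    (m n : ℕ) (hm : 1 ≤ m) (hn : 1 ≤ n) :
    Set.ncard {x : ℕ →₀ ℕ |
        x.sum (fun i c => c * q ^ i) = m ∧ x.sum (fun _ c => c) ≤ n} ≤
      Nat.fib (2 * n - 1) := by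
  have hq2 : 2 ≤ q := by rcases hq with h | h <;> omega
  have hset : {x : ℕ →₀ ℕ |
      x.sum (fun i c => c * q ^ i) = m ∧ x.sum (fun _ c => c) ≤ n} = PS q (m+1) m n := by
    ext x
    simp only [Set.mem_setOf_eq, PS, Set.mem_setOf_eq]
    constructor
    · rintro ⟨hv, hc⟩
      refine ⟨?_, hv, hc⟩
      intro i hi
      by_contra hxi
      have h1 : q^i ≤ x i * q^i := Nat.le_mul_of_pos_left _ (by omega)
      have h2 : x i * q^i ≤ m := by rw [← hv]; exact le_sum_val q x i
      have h3 : 2^i ≤ q^i := Nat.pow_le_pow_left hq2 i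
      have h4 : i < 2^i := Nat.lt_two_pow_self (n := i)
      omega
    · rintro ⟨_, hv, hc⟩
      exact ⟨hv, hc⟩
  rw [hset]
  have hm0 : m / q^m = 0 := by
    apply Nat.div_eq_of_lt
    calc m < 2^m := Nat.lt_two_pow_self (n := m)
      _ ≤ q^m := Nat.pow_le_pow_left hq2 m
  have hbound := cnt q hq2 m m n
  rw [hm0] at hbound
  simp only [Nat.zero_min, Nat.add_zero] at hbound
  have hmu : muf q m m = dsumf q m m := by
    unfold muf
    rw [hm0, Nat.zero_add]
  rw [hmu] at hbound
  set dd := dsumf q m m with hdd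
  by_cases hfeas : dd ≤ n
  · set D := dcntf q m m with hD
    have hD1 : 1 ≤ D := by
      by_contra hD0
      push_neg at hD0
      have hD0' : D = 0 := by omega
      have hdigs : ∀ i, i < m → m / q^i % q = 0 := by
        intro i hi
        have := (Finset.sum_eq_zero_iff.mp hD0') i (Finset.mem_range.mpr hi)
        omega
      have := eq_zero_of_digits q hq2 m m hdigs hm0
      omega
    have hDdd : D ≤ dd := by
      apply Finset.sum_le_sum
      intro i _
      exact Nat.min_le_left _ _
    obtain ⟨D', hD'⟩ : ∃ D', D = D' + 1 := ⟨D - 1, by omega⟩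
    set s := (n - dd) / (q - 1) with hs
    have hsle : s ≤ n - dd := Nat.div_le_self _ _
    rw [hD'] at hbound hDdd
    calc (PS q (m+1) m n).ncard ≤ Mf (D' + 1) s := hbound
      _ ≤ Nat.fib (2*(D'+s)+1) := Mf_le_fib D' s
      _ ≤ Nat.fib (2*n-1) := Nat.fib_mono (by omega)
  · push_neg at hfeas
    rw [PS_empty q hq2 m m n (by rw [hmu]; omega)]
    simp
end

section
/- Fix an odd prime p and positive integers m, n with n = 2. The number of solutions (a_1,...,a_r, b_1,...,b_r), with a_i ∈ ℕ and b_j ∈ {0,1}, to the system 2∑ a_i + ∑ b_j = 2 and b_1 + ∑_{i=1}^{r-1}(a_i+b_{i+1})p^i + a_r p^r = m is at most 1. -/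
-- arithmetic lemmas
private lemma pow_ne_add_pow {p : ℕ} (hp : p.Prime) (hodd : Odd p)
    (s j k : ℕ) : p ^ s ≠ p ^ j + p ^ k := by
  have h1 : 1 < p := hp.one_lt
  -- wlog j ≤ k
  wlog hjk : j ≤ k generalizing j k
  · intro h; exact this k j (le_of_not_ge hjk) (by rw [add_comm] at h; exact h)
  rcases eq_or_lt_of_le hjk with rfl | hlt
  · intro h
    have : Odd (p ^ s) := hodd.pow
    rw [h, ← two_mul] at this
    exact (Nat.not_odd_iff_even.mpr (even_two_mul _)) this
  · intro h
    rcases Nat.lt_or_ge j s with hs | hs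
    · have d1 : p ^ (j + 1) ∣ p ^ s := pow_dvd_pow p hs
      have d2 : p ^ (j + 1) ∣ p ^ k := pow_dvd_pow p hlt
      have d3 : p ^ (j + 1) ∣ p ^ j := by
        have := (Nat.dvd_sub d1 d2)
        rwa [h, Nat.add_sub_cancel] at this
      have := Nat.le_of_dvd (Nat.pow_pos (n := j) (by omega)) d3
      have := Nat.pow_lt_pow_succ h1 (n := j)
      omega
    · have h2 : p ^ s ≤ p ^ j := Nat.pow_le_pow_right (by omega) hs
      have h3 : 0 < p ^ k := Nat.pow_pos (n := k) (by omega)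
      omega

private lemma pair_unique {p : ℕ} (hp : p.Prime) {j k j' k' : ℕ}
    (h1 : j < k) (h2 : j' < k') (h : p ^ j + p ^ k = p ^ j' + p ^ k') :
    j = j' ∧ k = k' := by
  have h1p : 1 < p := hp.one_lt
  have key : ∀ a b a' b' : ℕ, a < b → a' < b' →
      p ^ a + p ^ b = p ^ a' + p ^ b' → ¬ a < a' := by
    intro a b a' b' hab ha'b' heq hlt
    have d1 : p ^ (a + 1) ∣ p ^ b := pow_dvd_pow p hab
    have d2 : p ^ (a + 1) ∣ p ^ a' := pow_dvd_pow p hlt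
    have d3 : p ^ (a + 1) ∣ p ^ b' := pow_dvd_pow p (by omega)
    have d4 : p ^ (a + 1) ∣ p ^ a := by
      have := Nat.dvd_sub (d2.add d3) d1
      rwa [← heq, Nat.add_sub_cancel] at this
    have := Nat.le_of_dvd (Nat.pow_pos (n := a) (by omega)) d4
    have := Nat.pow_lt_pow_succ h1p (n := a)
    omega
  have hjj : j = j' := by
    rcases lt_trichotomy j j' with hl | he | hg
    · exact absurd hl (key j k j' k' h1 h2 h)
    · exact he
    · exact absurd hg (key j' k' j k h2 h1 h.symm)
  subst hjj
  have : p ^ k = p ^ k' := by omega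
  exact ⟨rfl, Nat.pow_right_injective (by omega) this⟩

private lemma sum_eq_zero_imp {f : ℕ →₀ ℕ} (h : f.sum (fun _ c => c) = 0) : f = 0 := by
  ext i
  by_contra hi
  have hmem : i ∈ f.support := Finsupp.mem_support_iff.mpr (by simpa using hi)
  have := Finset.sum_eq_zero_iff.mp h i hmem
  simp_all

private lemma sum_eq_one_imp {f : ℕ →₀ ℕ} (h : f.sum (fun _ c => c) = 1) :
    ∃ i, f = Finsupp.single i 1 := by
  have hc : Multiset.card f.toMultiset = 1 := by
    rw [Finsupp.card_toMultiset]; exact h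
  obtain ⟨i, hi⟩ := Multiset.card_eq_one.mp hc
  refine ⟨i, ?_⟩
  have := congrArg Multiset.toFinsupp hi
  rwa [Finsupp.toMultiset_toFinsupp, Multiset.toFinsupp_singleton] at this

private lemma sum_eq_two_imp {f : ℕ →₀ ℕ} (hb : ∀ j, f j ≤ 1)
    (h : f.sum (fun _ c => c) = 2) :
    ∃ j k, j ≠ k ∧ f = Finsupp.single j 1 + Finsupp.single k 1 := by
  have hc : Multiset.card f.toMultiset = 2 := by
    rw [Finsupp.card_toMultiset]; exact h
  obtain ⟨j, k, hjk⟩ := Multiset.card_eq_two.mp hc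
  have hne : j ≠ k := by
    rintro rfl
    have := Finsupp.count_toMultiset f j
    rw [hjk] at this
    have hcount : ({j, j} : Multiset ℕ).count j = 2 := by
      simp [Multiset.insert_eq_cons]
    have := hb j
    omega
  refine ⟨j, k, hne, ?_⟩
  have := congrArg Multiset.toFinsupp hjk
  rw [Finsupp.toMultiset_toFinsupp] at this
  rw [this, Multiset.insert_eq_cons, ← Multiset.singleton_add, Multiset.toFinsupp_add,
    Multiset.toFinsupp_singleton, Multiset.toFinsupp_singleton]

private lemma shape {p : ℕ} {m : ℕ} (a b : ℕ →₀ ℕ)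
    (hb : ∀ j, b j ≤ 1)
    (hdeg : 2 * a.sum (fun _ c => c) + b.sum (fun _ c => c) = 2)
    (hval : a.sum (fun i c => c * p ^ (i + 1)) + b.sum (fun j c => c * p ^ j) = m) :
    (∃ i, a = Finsupp.single i 1 ∧ b = 0 ∧ m = p ^ (i + 1)) ∨
    (∃ j k, j ≠ k ∧ a = 0 ∧ b = Finsupp.single j 1 + Finsupp.single k 1 ∧
      m = p ^ j + p ^ k) := by
  have hA : a.sum (fun _ c => c) = 0 ∨ a.sum (fun _ c => c) = 1 := by omega
  rcases hA with hA | hA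
  · right
    have ha0 : a = 0 := sum_eq_zero_imp hA
    have hB : b.sum (fun _ c => c) = 2 := by omega
    obtain ⟨j, k, hne, hbeq⟩ := sum_eq_two_imp hb hB
    refine ⟨j, k, hne, ha0, hbeq, ?_⟩
    rw [ha0, hbeq] at hval
    rw [Finsupp.sum_zero_index] at hval
    rw [Finsupp.sum_add_index' (by intro i; simp) (by intros; ring)] at hval
    simp [Finsupp.sum_single_index] at hval
    omega
  · left
    have hB : b.sum (fun _ c => c) = 0 := by omega
    have hb0 : b = 0 := sum_eq_zero_imp hB
    obtain ⟨i, haeq⟩ := sum_eq_one_imp hA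
    refine ⟨i, haeq, hb0, ?_⟩
    rw [haeq, hb0] at hval
    rw [Finsupp.sum_zero_index] at hval
    rw [Finsupp.sum_single_index (by simp)] at hval
    omega

theorem N_degree_two_le_one (p : ℕ) (hp : p.Prime) (hodd : Odd p) (m : ℕ) (hm : 1 ≤ m) :
    Set.ncard {ab : (ℕ →₀ ℕ) × (ℕ →₀ ℕ) |
        (∀ j, ab.2 j ≤ 1) ∧
        2 * ab.1.sum (fun _ c => c) + ab.2.sum (fun _ c => c) = 2 ∧
        ab.1.sum (fun i c => c * p ^ (i + 1)) + ab.2.sum (fun j c => c * p ^ j) = m} ≤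
      1 := by
  have hsub : Set.Subsingleton {ab : (ℕ →₀ ℕ) × (ℕ →₀ ℕ) |
      (∀ j, ab.2 j ≤ 1) ∧
      2 * ab.1.sum (fun _ c => c) + ab.2.sum (fun _ c => c) = 2 ∧
      ab.1.sum (fun i c => c * p ^ (i + 1)) + ab.2.sum (fun j c => c * p ^ j) = m} := by
    rintro ⟨a₁, b₁⟩ ⟨hb₁, hd₁, hv₁⟩ ⟨a₂, b₂⟩ ⟨hb₂, hd₂, hv₂⟩
    have s₁ := shape a₁ b₁ hb₁ hd₁ hv₁
    have s₂ := shape a₂ b₂ hb₂ hd₂ hv₂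
    rcases s₁ with ⟨i, ha₁, hbz₁, hm₁⟩ | ⟨j, k, hjk, haz₁, hbe₁, hm₁⟩
    · rcases s₂ with ⟨i', ha₂, hbz₂, hm₂⟩ | ⟨j', k', hjk', haz₂, hbe₂, hm₂⟩
      · have : i + 1 = i' + 1 :=
          Nat.pow_right_injective hp.two_le (hm₁.symm.trans hm₂)
        have : i = i' := by omega
        subst this
        simp [ha₁, ha₂, hbz₁, hbz₂]
      · exact absurd (hm₁.symm.trans hm₂) (pow_ne_add_pow hp hodd _ _ _)
    · rcases s₂ with ⟨i', ha₂, hbz₂, hm₂⟩ | ⟨j', k', hjk', haz₂, hbe₂, hm₂⟩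
      · exact absurd (hm₂.symm.trans hm₁) (pow_ne_add_pow hp hodd _ _ _)
      · have heq : p ^ j + p ^ k = p ^ j' + p ^ k' := by omega
        have hb : Finsupp.single j (1:ℕ) + Finsupp.single k 1 =
            Finsupp.single j' 1 + Finsupp.single k' 1 := by
          rcases Nat.lt_or_ge j k with h1 | h1
          · rcases Nat.lt_or_ge j' k' with h2 | h2
            · obtain ⟨rfl, rfl⟩ := pair_unique hp h1 h2 heq
              rfl
            · have h2' : k' < j' := lt_of_le_of_ne h2 (Ne.symm hjk')
              obtain ⟨rfl, rfl⟩ := pair_unique hp h1 h2'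
                (by rw [heq]; ring)
              rw [add_comm]
          · have h1' : k < j := lt_of_le_of_ne h1 (Ne.symm hjk)
            rcases Nat.lt_or_ge j' k' with h2 | h2
            · obtain ⟨rfl, rfl⟩ := pair_unique hp h1' h2
                (by rw [← heq]; ring)
              rw [add_comm]
            · have h2' : k' < j' := lt_of_le_of_ne h2 (Ne.symm hjk')
              obtain ⟨rfl, rfl⟩ := pair_unique hp h1' h2'
                (by rw [add_comm, heq]; ring)
              rfl
        simp [haz₁, haz₂, hbe₁, hbe₂, hb]
  calc Set.ncard _ ≤ 1 := Set.ncard_le_one_iff_eq (hsub.finite) |>.mpr (by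
        rcases hsub.eq_empty_or_singleton with h | ⟨x, h⟩
        · exact Or.inl h
        · exact Or.inr ⟨x, h⟩)
end
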